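/- arXiv:2307.00839 — 5 statements merged into one kernel-verified Lean document; each statement's English description precedes it below -/
import Mathlib

section
/- Let ν₁, ν₂ > 0 with ν₁ ≠ ν₂ (anisotropic two-dimensional harmonic oscillator) and let ρ₀ = (x₁⁰, x₂⁰, ξ₁⁰, ξ₂⁰) ∈ ℝ⁴ be nonzero. Define the trajectory x^t = (x₁^t, x₂^t) by x_j^t = cos(ν_j t)·x_j⁰ + sin(ν_j t)·ξ_j⁰/ν_j for j = 1, 2, let p(ρ₀) = (ν₁²(x₁⁰)² + ν₂²(x₂⁰)² + (ξ₁⁰)² + (ξ₂⁰)²)/2, and let γ : ℝ → ℝ, γ(t) = |x^t| = ((x₁^t)² + (x₂^t)²)^{1/2}. Then: (a) γ is Lipschitz with constant √(2·p(ρ₀)); (b) γ is C^∞ on the open set ℝ ∖ {t : γ(t) = 0}; (c) the set S_γ = {t ∈ ℝ : γ(t) = 0} ∪ {t ∈ ℝ : γ(t) ≠ 0 and γ'(t) = 0} is locally finite, i.e. S_γ ∩ I is finite for every bounded interval I ⊆ ℝ; (d) for every bounded interval I ⊆ ℝ there exists k ∈ ℕ such that for every s ∈ ℝ, the set {t ∈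 I : γ(t) = s} has at most k elements. -/
open Real Set Filter

private lemma analyticAt_rsin (x : ℝ) : AnalyticAt ℝ Real.sin x := by
  have hC : AnalyticAt ℂ Complex.sin (Complex.ofRealCLM x) :=
    Complex.analyticAt_iff_eventually_differentiableAt.2
      (Filter.Eventually.of_forall fun w => Complex.differentiable_sin w)
  have hE : Real.sin = fun y : ℝ => Complex.reCLM (Complex.sin (Complex.ofRealCLM y)) := by
    funext y
    simp [Complex.reCLM_apply, Complex.ofRealCLM_apply, Complex.sin_ofReal_re]
  rw [hE]
  exact (Complex.reCLM.analyticAt _).comp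
    (hC.restrictScalars.comp (Complex.ofRealCLM.analyticAt x))

private lemma analyticAt_rcos (x : ℝ) : AnalyticAt ℝ Real.cos x := by
  have hC : AnalyticAt ℂ Complex.cos (Complex.ofRealCLM x) :=
    Complex.analyticAt_iff_eventually_differentiableAt.2
      (Filter.Eventually.of_forall fun w => Complex.differentiable_cos w)
  have hE : Real.cos = fun y : ℝ => Complex.reCLM (Complex.cos (Complex.ofRealCLM y)) := by
    funext y
    simp [Complex.reCLM_apply, Complex.ofRealCLM_apply, Complex.cos_ofReal_re]
  rw [hE]
  exact (Complex.reCLM.analyticAt _).comp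
    (hC.restrictScalars.comp (Complex.ofRealCLM.analyticAt x))

private lemma analyticAt_trig (ν a b : ℝ) (x : ℝ) :
    AnalyticAt ℝ (fun u : ℝ => a * Real.cos (ν * u) + b * Real.sin (ν * u)) x := by
  have hm : AnalyticAt ℝ (fun u : ℝ => ν * u) x := analyticAt_const.mul analyticAt_id
  exact (analyticAt_const.mul ((analyticAt_rcos (ν * x)).comp hm)).add
    (analyticAt_const.mul ((analyticAt_rsin (ν * x)).comp hm))

private lemma hasDerivAt_trig (ν a b t : ℝ) :
    HasDerivAt (fun u : ℝ => a * Real.cos (ν * u) + b * Real.sin (ν * u))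
      ((ν * b) * Real.cos (ν * t) + (-(ν * a)) * Real.sin (ν * t)) t := by
  have hm : HasDerivAt (fun u : ℝ => ν * u) ν t := by
    simpa using (hasDerivAt_id t).const_mul ν
  have hc : HasDerivAt (fun u : ℝ => Real.cos (ν * u)) (-Real.sin (ν * t) * ν) t :=
    (Real.hasDerivAt_cos (ν * t)).comp t hm
  have hs : HasDerivAt (fun u : ℝ => Real.sin (ν * u)) (Real.cos (ν * t) * ν) t :=
    (Real.hasDerivAt_sin (ν * t)).comp t hm
  have h := (hc.const_mul a).add (hs.const_mul b)
  exact h.congr_deriv (by ring)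

private lemma zero_step (ω₁ ω₂ A₁ B₁ A₂ B₂ : ℝ)
    (h : ∀ t : ℝ, A₁ * Real.cos (ω₁ * t) + B₁ * Real.sin (ω₁ * t)
        + (A₂ * Real.cos (ω₂ * t) + B₂ * Real.sin (ω₂ * t)) = 0) :
    ∀ t : ℝ, (ω₁ * B₁) * Real.cos (ω₁ * t) + (-(ω₁ * A₁)) * Real.sin (ω₁ * t)
        + ((ω₂ * B₂) * Real.cos (ω₂ * t) + (-(ω₂ * A₂)) * Real.sin (ω₂ * t)) = 0 := by
  have hW : ∀ t : ℝ, HasDerivAt (fun u : ℝ => A₁ * Real.cos (ω₁ * u) + B₁ * Real.sin (ω₁ * u)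
        + (A₂ * Real.cos (ω₂ * u) + B₂ * Real.sin (ω₂ * u)))
      ((ω₁ * B₁) * Real.cos (ω₁ * t) + (-(ω₁ * A₁)) * Real.sin (ω₁ * t)
        + ((ω₂ * B₂) * Real.cos (ω₂ * t) + (-(ω₂ * A₂)) * Real.sin (ω₂ * t))) t :=
    fun t => (hasDerivAt_trig ω₁ A₁ B₁ t).add (hasDerivAt_trig ω₂ A₂ B₂ t)
  intro t
  have h0 : deriv (fun u : ℝ => A₁ * Real.cos (ω₁ * u) + B₁ * Real.sin (ω₁ * u)
        + (A₂ * Real.cos (ω₂ * u) + B₂ * Real.sin (ω₂ * u))) t = 0 := by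
    have hfun : (fun u : ℝ => A₁ * Real.cos (ω₁ * u) + B₁ * Real.sin (ω₁ * u)
        + (A₂ * Real.cos (ω₂ * u) + B₂ * Real.sin (ω₂ * u))) = fun _ => (0 : ℝ) := funext h
    rw [hfun]
    exact deriv_const t 0
  rw [(hW t).deriv] at h0
  exact h0

private lemma trig_indep (ω₁ ω₂ : ℝ) (h1 : 0 < ω₁) (h2 : 0 < ω₂) (hne : ω₁ ≠ ω₂)
    (A₁ B₁ A₂ B₂ : ℝ)
    (h : ∀ t : ℝ, A₁ * Real.cos (ω₁ * t) + B₁ * Real.sin (ω₁ * t)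
        + (A₂ * Real.cos (ω₂ * t) + B₂ * Real.sin (ω₂ * t)) = 0) :
    A₁ = 0 ∧ B₁ = 0 ∧ A₂ = 0 ∧ B₂ = 0 := by
  have hd1 := zero_step ω₁ ω₂ A₁ B₁ A₂ B₂ h
  have hd2 := zero_step ω₁ ω₂ _ _ _ _ hd1
  have hd3 := zero_step ω₁ ω₂ _ _ _ _ hd2
  have c0 : ∀ ω : ℝ, Real.cos (ω * 0) = 1 := fun ω => by rw [mul_zero, Real.cos_zero]
  have s0 : ∀ ω : ℝ, Real.sin (ω * 0) = 0 := fun ω => by rw [mul_zero, Real.sin_zero]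
  have e0 := h 0
  have e1 := hd1 0
  have e2 := hd2 0
  have e3 := hd3 0
  rw [c0, s0, c0, s0] at e0 e1 e2 e3
  have hsq : ω₂ ^ 2 - ω₁ ^ 2 ≠ 0 := by
    rcases lt_or_gt_of_ne hne with hlt | hlt <;> nlinarith
  have hA1 : A₁ = 0 := by
    have hA : A₁ * (ω₂ ^ 2 - ω₁ ^ 2) = 0 := by linear_combination ω₂ ^ 2 * e0 + e2
    rcases mul_eq_zero.1 hA with h' | h'
    · exact h'
    · exact absurd h' hsq
  have hA2 : A₂ = 0 := by linear_combination e0 - hA1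
  have hB1 : B₁ = 0 := by
    have hB : B₁ * (ω₁ * (ω₂ ^ 2 - ω₁ ^ 2)) = 0 := by linear_combination ω₂ ^ 2 * e1 + e3
    rcases mul_eq_zero.1 hB with h' | h'
    · exact h'
    · exact absurd h' (mul_ne_zero h1.ne' hsq)
  have hB2 : B₂ = 0 := by
    have hB : ω₂ * B₂ = 0 := by linear_combination e1 - ω₁ * hB1
    rcases mul_eq_zero.1 hB with h' | h'
    · exact absurd h' h2.ne'
    · exact h'
  exact ⟨hA1, hB1, hA2, hB2⟩

private lemma finite_zeros {g : ℝ → ℝ} (hg : ∀ x : ℝ, AnalyticAt ℝ g x)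
    (hne : ∃ t, g t ≠ 0) (A B : ℝ) : ({t : ℝ | g t = 0} ∩ Set.Icc A B).Finite := by
  by_contra hinf
  have hinf' : ({t : ℝ | g t = 0} ∩ Set.Icc A B).Infinite := hinf
  obtain ⟨x, -, hx⟩ := hinf'.exists_accPt_of_subset_isCompact isCompact_Icc
    Set.inter_subset_right
  have hx' : AccPt x (Filter.principal {t : ℝ | g t = 0}) :=
    hx.mono (Filter.principal_mono.2 Set.inter_subset_left)
  have hfreq : ∃ᶠ z in nhdsWithin x {x}ᶜ, g z = 0 := by
    have h1 := accPt_iff_frequently.1 hx'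
    rw [frequently_nhdsWithin_iff]
    exact h1.mono fun y hy => ⟨hy.2, hy.1⟩
  have hzero := AnalyticOnNhd.eqOn_zero_of_preconnected_of_frequently_eq_zero
    (fun z _ => hg z) isPreconnected_univ (Set.mem_univ x) hfreq
  obtain ⟨t, ht⟩ := hne
  exact ht (hzero (Set.mem_univ t))

private lemma card_le_rolle {T Z : Set ℝ} (hT : T.Finite) (hZ : Z.Finite)
    (h : ∀ a ∈ T, ∀ b ∈ T, a < b → ∃ c, c ∈ Z ∧ a < c ∧ c < b) :
    T.ncard ≤ Z.ncard + 1 := by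
  rcases T.eq_empty_or_nonempty with hE | hne
  · simp [hE]
  obtain ⟨M, hMT, hMmax'⟩ := hT.exists_maximal hne
  have hMmax : ∀ a ∈ T, a ≤ M := by
    intro a ha
    rcases le_total a M with h' | h'
    · exact h'
    · exact hMmax' ha h'
  set φ : ℝ → ℝ := fun a => sInf (Z ∩ Set.Ioi a) with hφ
  have hmem : ∀ a ∈ T \ {M}, φ a ∈ Z ∩ Set.Ioi a := by
    intro a ha
    have haM : a < M := lt_of_le_of_ne (hMmax a ha.1) (by simpa using ha.2)
    obtain ⟨c, hcZ, hac, -⟩ := h a ha.1 M hMT haM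
    exact Set.Nonempty.csInf_mem ⟨c, hcZ, hac⟩ (hZ.inter_of_left _)
  have hinj : Set.InjOn φ (T \ {M}) := by
    intro a ha b hb hab
    by_contra hne'
    rcases lt_or_gt_of_ne hne' with h' | h'
    · obtain ⟨c, hcZ, hac, hcb⟩ := h a ha.1 b hb.1 h'
      have h1 : φ a ≤ c := csInf_le (hZ.inter_of_left _).bddBelow ⟨hcZ, hac⟩
      have h2 : b < φ b := (hmem b hb).2
      rw [hab] at h1
      linarith
    · obtain ⟨c, hcZ, hbc, hca⟩ := h b hb.1 a ha.1 h'
      have h1 : φ b ≤ c := csInf_le (hZ.inter_of_left _).bddBelow ⟨hcZ, hbc⟩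
      have h2 : a < φ a := (hmem a ha).2
      rw [hab] at h2
      linarith
  have h1 : (T \ {M}).ncard ≤ Z.ncard :=
    Set.ncard_le_ncard_of_injOn φ (fun a ha => (hmem a ha).1) hinj hZ
  have h2 : T.ncard ≤ (T \ {M}).ncard + 1 := by
    have hsub : T ⊆ insert M (T \ {M}) := by
      intro x hx
      by_cases h' : x = M
      · simp [h']
      · exact Set.mem_insert_iff.2 (Or.inr ⟨hx, h'⟩)
    calc T.ncard ≤ (insert M (T \ {M})).ncard :=
          Set.ncard_le_ncard hsub ((hT.diff (t := {M})).insert M)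
      _ ≤ (T \ {M}).ncard + 1 := Set.ncard_insert_le _ _
  omega

private lemma sqrt_rev_triangle (a b c d : ℝ) :
    |Real.sqrt (a ^ 2 + b ^ 2) - Real.sqrt (c ^ 2 + d ^ 2)| ≤
      Real.sqrt ((a - c) ^ 2 + (b - d) ^ 2) := by
  have key : ∀ p q r s : ℝ,
      Real.sqrt (p ^ 2 + q ^ 2) ≤ Real.sqrt ((p - r) ^ 2 + (q - s) ^ 2)
        + Real.sqrt (r ^ 2 + s ^ 2) := by
    intro p q r s
    have hu := Real.sqrt_nonneg ((p - r) ^ 2 + (q - s) ^ 2)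
    have hv := Real.sqrt_nonneg (r ^ 2 + s ^ 2)
    have hu2 := Real.sq_sqrt (by positivity : (0:ℝ) ≤ (p - r) ^ 2 + (q - s) ^ 2)
    have hv2 := Real.sq_sqrt (by positivity : (0:ℝ) ≤ r ^ 2 + s ^ 2)
    have hcs : (p - r) * r + (q - s) * s ≤
        Real.sqrt ((p - r) ^ 2 + (q - s) ^ 2) * Real.sqrt (r ^ 2 + s ^ 2) := by
      nlinarith [sq_nonneg ((p - r) * s - (q - s) * r), mul_nonneg hu hv,
        sq_nonneg (Real.sqrt ((p - r) ^ 2 + (q - s) ^ 2) * Real.sqrt (r ^ 2 + s ^ 2)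
          - ((p - r) * r + (q - s) * s)),
        sq_nonneg (Real.sqrt ((p - r) ^ 2 + (q - s) ^ 2) * Real.sqrt (r ^ 2 + s ^ 2)
          + ((p - r) * r + (q - s) * s))]
    have hle : p ^ 2 + q ^ 2 ≤ (Real.sqrt ((p - r) ^ 2 + (q - s) ^ 2)
        + Real.sqrt (r ^ 2 + s ^ 2)) ^ 2 := by nlinarith
    calc Real.sqrt (p ^ 2 + q ^ 2)
        ≤ Real.sqrt ((Real.sqrt ((p - r) ^ 2 + (q - s) ^ 2)
            + Real.sqrt (r ^ 2 + s ^ 2)) ^ 2) := Real.sqrt_le_sqrt hle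
      _ = _ := Real.sqrt_sq (by positivity)
  rw [abs_sub_le_iff]
  constructor
  · have := key a b c d
    linarith
  · have h2 := key c d a b
    have heq : (c - a) ^ 2 + (d - b) ^ 2 = (a - c) ^ 2 + (b - d) ^ 2 := by ring
    rw [heq] at h2
    linarith
/-- Properties of the radial component `γ(t) = |xᵗ|` of a projected trajectory of an
anisotropic two-dimensional harmonic oscillator with frequencies `ν₁ ≠ ν₂` and nonzero
initial datum `ρ₀ = (x₁⁰, x₂⁰, ξ₁⁰, ξ₂⁰)`:
(a) `γ` is `√(2 p(ρ₀))`-Lipschitz; (b) `γ` is `C^∞` away from its zeros; (c) the set of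
zeros of `γ` and critical points of `γ` is locally finite; (d) on every bounded interval
the level sets of `γ` have uniformly bounded cardinality. -/
theorem stmt_13 (ν₁ ν₂ : ℝ) (hν₁ : 0 < ν₁) (hν₂ : 0 < ν₂) (hanis : ν₁ ≠ ν₂)
    (x₁0 x₂0 ξ₁0 ξ₂0 : ℝ)
    (hρ₀ : ¬(x₁0 = 0 ∧ x₂0 = 0 ∧ ξ₁0 = 0 ∧ ξ₂0 = 0))
    (x₁ x₂ γ : ℝ → ℝ) (p0 : ℝ)
    (hx₁ : ∀ t, x₁ t = Real.cos (ν₁ * t) * x₁0 + Real.sin (ν₁ * t) * ξ₁0 / ν₁)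
    (hx₂ : ∀ t, x₂ t = Real.cos (ν₂ * t) * x₂0 + Real.sin (ν₂ * t) * ξ₂0 / ν₂)
    (hγ : ∀ t, γ t = Real.sqrt ((x₁ t) ^ 2 + (x₂ t) ^ 2))
    (hp0 : p0 = (ν₁ ^ 2 * x₁0 ^ 2 + ν₂ ^ 2 * x₂0 ^ 2 + ξ₁0 ^ 2 + ξ₂0 ^ 2) / 2) :
    (∀ s t : ℝ, |γ s - γ t| ≤ Real.sqrt (2 * p0) * |s - t|) ∧
    ContDiffOn ℝ (⊤ : ℕ∞) γ {t : ℝ | γ t ≠ 0} ∧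
    (∀ A B : ℝ,
      (({t : ℝ | γ t = 0} ∪ {t : ℝ | γ t ≠ 0 ∧ deriv γ t = 0}) ∩ Set.Icc A B).Finite) ∧
    (∀ A B : ℝ, ∃ k : ℕ, ∀ s : ℝ,
      ({t : ℝ | t ∈ Set.Icc A B ∧ γ t = s}).Finite ∧
      ({t : ℝ | t ∈ Set.Icc A B ∧ γ t = s}).ncard ≤ k) := by
  have hν₁' : ν₁ ≠ 0 := hν₁.ne'
  have hν₂' : ν₂ ≠ 0 := hν₂.ne'
  set b₁ : ℝ := ξ₁0 / ν₁ with hb₁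
  set b₂ : ℝ := ξ₂0 / ν₂ with hb₂
  have hξ₁ : ξ₁0 = ν₁ * b₁ := by rw [hb₁]; field_simp
  have hξ₂ : ξ₂0 = ν₂ * b₂ := by rw [hb₂]; field_simp
  set X₁ : ℝ → ℝ := fun u => x₁0 * Real.cos (ν₁ * u) + b₁ * Real.sin (ν₁ * u) with hX₁def
  set X₂ : ℝ → ℝ := fun u => x₂0 * Real.cos (ν₂ * u) + b₂ * Real.sin (ν₂ * u) with hX₂def
  set Ξ₁ : ℝ → ℝ := fun u => (ν₁ * b₁) * Real.cos (ν₁ * u) + (-(ν₁ * x₁0)) * Real.sin (ν₁ * u)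
    with hΞ₁def
  set Ξ₂ : ℝ → ℝ := fun u => (ν₂ * b₂) * Real.cos (ν₂ * u) + (-(ν₂ * x₂0)) * Real.sin (ν₂ * u)
    with hΞ₂def
  set F : ℝ → ℝ := fun u => X₁ u ^ 2 + X₂ u ^ 2 with hFdef
  set HF : ℝ → ℝ := fun u => 2 * X₁ u * Ξ₁ u + 2 * X₂ u * Ξ₂ u with hHFdef
  have hx₁E : x₁ = X₁ := by
    funext t
    rw [hx₁ t, hX₁def]
    simp only [hb₁]
    ring
  have hx₂E : x₂ = X₂ := by
    funext t
    rw [hx₂ t, hX₂def]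
    simp only [hb₂]
    ring
  have hγE : γ = fun t => Real.sqrt (F t) := by
    funext t
    rw [hγ t, hx₁E, hx₂E, hFdef]
  have hX₁d : ∀ t, HasDerivAt X₁ (Ξ₁ t) t := by
    intro t
    simp only [hX₁def, hΞ₁def]
    exact hasDerivAt_trig ν₁ x₁0 b₁ t
  have hX₂d : ∀ t, HasDerivAt X₂ (Ξ₂ t) t := by
    intro t
    simp only [hX₂def, hΞ₂def]
    exact hasDerivAt_trig ν₂ x₂0 b₂ t
  have hFd : ∀ t, HasDerivAt F (HF t) t := by
    intro t
    simp only [hFdef, hHFdef]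
    have h1 := ((hX₁d t).pow 2).add ((hX₂d t).pow 2)
    exact h1.congr_deriv (by norm_num)
  have hFnn : ∀ u, 0 ≤ F u := by
    intro u
    simp only [hFdef]
    positivity
  -- analyticity
  have hX₁a : ∀ x, AnalyticAt ℝ X₁ x := by
    intro x; simp only [hX₁def]; exact analyticAt_trig ν₁ x₁0 b₁ x
  have hX₂a : ∀ x, AnalyticAt ℝ X₂ x := by
    intro x; simp only [hX₂def]; exact analyticAt_trig ν₂ x₂0 b₂ x
  have hΞ₁a : ∀ x, AnalyticAt ℝ Ξ₁ x := by
    intro x; simp only [hΞ₁def]; exact analyticAt_trig ν₁ (ν₁ * b₁) (-(ν₁ * x₁0)) x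
  have hΞ₂a : ∀ x, AnalyticAt ℝ Ξ₂ x := by
    intro x; simp only [hΞ₂def]; exact analyticAt_trig ν₂ (ν₂ * b₂) (-(ν₂ * x₂0)) x
  have hFana : ∀ x, AnalyticAt ℝ F x := by
    intro x
    simp only [hFdef]
    exact ((hX₁a x).pow 2).add ((hX₂a x).pow 2)
  have hHFana : ∀ x, AnalyticAt ℝ HF x := by
    intro x
    simp only [hHFdef]
    exact (((analyticAt_const.mul (hX₁a x))).mul (hΞ₁a x)).add
      (((analyticAt_const.mul (hX₂a x))).mul (hΞ₂a x))
  -- HF is not identically zero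
  have hHF_ne : ∃ t, HF t ≠ 0 := by
    by_contra hc
    push_neg at hc
    have hclaim : ∀ t : ℝ, (2 * ν₁ * (x₁0 * b₁)) * Real.cos (2 * ν₁ * t)
        + (ν₁ * (b₁ ^ 2 - x₁0 ^ 2)) * Real.sin (2 * ν₁ * t)
        + ((2 * ν₂ * (x₂0 * b₂)) * Real.cos (2 * ν₂ * t)
          + (ν₂ * (b₂ ^ 2 - x₂0 ^ 2)) * Real.sin (2 * ν₂ * t)) = 0 := by
      intro t
      have hct := hc t
      simp only [hHFdef, hX₁def, hX₂def, hΞ₁def, hΞ₂def] at hct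
      rw [show (2 * ν₁ * t) = 2 * (ν₁ * t) by ring, show (2 * ν₂ * t) = 2 * (ν₂ * t) by ring,
        Real.cos_two_mul, Real.cos_two_mul, Real.sin_two_mul, Real.sin_two_mul]
      linear_combination hct + (2 * ν₁ * x₁0 * b₁) * Real.sin_sq_add_cos_sq (ν₁ * t)
        + (2 * ν₂ * x₂0 * b₂) * Real.sin_sq_add_cos_sq (ν₂ * t)
    obtain ⟨hA1, hB1, hA2, hB2⟩ := trig_indep (2 * ν₁) (2 * ν₂) (by linarith) (by linarith)
      (fun hh => hanis (by linarith)) _ _ _ _ hclaim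
    have hcoord : ∀ ν a b : ℝ, 0 < ν → 2 * ν * (a * b) = 0 → ν * (b ^ 2 - a ^ 2) = 0 →
        a = 0 ∧ b = 0 := by
      intro ν a b hν hab hba
      have hxb : a * b = 0 := by
        rcases mul_eq_zero.1 hab with h' | h'
        · exact absurd h' (by positivity)
        · exact h'
      have hbb : b ^ 2 = a ^ 2 := by
        rcases mul_eq_zero.1 hba with h' | h'
        · exact absurd h' hν.ne'
        · have := sub_eq_zero.1 h'
          linarith
      rcases mul_eq_zero.1 hxb with h' | h'
      · refine ⟨h', ?_⟩
        have : b ^ 2 = 0 := by rw [hbb, h']; ring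
        exact pow_eq_zero_iff two_ne_zero |>.1 this
      · refine ⟨?_, h'⟩
        have : a ^ 2 = 0 := by rw [← hbb, h']; ring
        exact pow_eq_zero_iff two_ne_zero |>.1 this
    obtain ⟨hx1, hb1⟩ := hcoord ν₁ x₁0 b₁ hν₁ hA1 hB1
    obtain ⟨hx2, hb2⟩ := hcoord ν₂ x₂0 b₂ hν₂ hA2 hB2
    exact hρ₀ ⟨hx1, hx2, by rw [hξ₁, hb1, mul_zero], by rw [hξ₂, hb2, mul_zero]⟩
  -- F is not identically zero
  have hF_ne : ∃ t, F t ≠ 0 := by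
    by_contra hcon
    push_neg at hcon
    obtain ⟨w, hw⟩ := hHF_ne
    apply hw
    have hFw := hcon w
    simp only [hFdef] at hFw
    have h1 : X₁ w = 0 := by
      have hs : X₁ w ^ 2 = 0 := le_antisymm (by nlinarith [sq_nonneg (X₂ w)]) (sq_nonneg _)
      exact pow_eq_zero_iff two_ne_zero |>.1 hs
    have h2 : X₂ w = 0 := by
      have hs : X₂ w ^ 2 = 0 := le_antisymm (by nlinarith [sq_nonneg (X₁ w)]) (sq_nonneg _)
      exact pow_eq_zero_iff two_ne_zero |>.1 hs
    simp only [hHFdef]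
    rw [h1, h2]
    ring
  -- conservation identities
  have hcons₁ : ∀ u, Ξ₁ u ^ 2 + (ν₁ * b₁ * Real.sin (ν₁ * u) + ν₁ * x₁0 * Real.cos (ν₁ * u)) ^ 2
      = ν₁ ^ 2 * (x₁0 ^ 2 + b₁ ^ 2) := by
    intro u
    simp only [hΞ₁def]
    linear_combination (ν₁ ^ 2 * (x₁0 ^ 2 + b₁ ^ 2)) * Real.sin_sq_add_cos_sq (ν₁ * u)
  have hcons₂ : ∀ u, Ξ₂ u ^ 2 + (ν₂ * b₂ * Real.sin (ν₂ * u) + ν₂ * x₂0 * Real.cos (ν₂ * u)) ^ 2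
      = ν₂ ^ 2 * (x₂0 ^ 2 + b₂ ^ 2) := by
    intro u
    simp only [hΞ₂def]
    linear_combination (ν₂ ^ 2 * (x₂0 ^ 2 + b₂ ^ 2)) * Real.sin_sq_add_cos_sq (ν₂ * u)
  have h2p0 : 2 * p0 = ν₁ ^ 2 * (x₁0 ^ 2 + b₁ ^ 2) + ν₂ ^ 2 * (x₂0 ^ 2 + b₂ ^ 2) := by
    rw [hp0, hξ₁, hξ₂]; ring
  have h2p0nn : 0 ≤ 2 * p0 := by rw [h2p0]; positivity
  refine ⟨?_, ?_, ?_, ?_⟩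
  -- (a) Lipschitz
  · intro s t
    have key : ∀ (ν a b : ℝ) (X Ξ : ℝ → ℝ), (∀ u, HasDerivAt X (Ξ u) u) →
        (∀ u, Ξ u ^ 2 + (ν * b * Real.sin (ν * u) + ν * a * Real.cos (ν * u)) ^ 2
          = ν ^ 2 * (a ^ 2 + b ^ 2)) →
        |X s - X t| ≤ Real.sqrt (ν ^ 2 * (a ^ 2 + b ^ 2)) * |s - t| := by
      intro ν a b X Ξ hd hcons
      have hbd : ∀ u ∈ (Set.univ : Set ℝ), ‖Ξ u‖ ≤ Real.sqrt (ν ^ 2 * (a ^ 2 + b ^ 2)) := by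
        intro u _
        rw [Real.norm_eq_abs, ← Real.sqrt_sq_eq_abs]
        apply Real.sqrt_le_sqrt
        nlinarith [hcons u, sq_nonneg (ν * b * Real.sin (ν * u) + ν * a * Real.cos (ν * u))]
      have := Convex.norm_image_sub_le_of_norm_hasDerivWithin_le
        (f := X) (f' := Ξ) (fun u _ => (hd u).hasDerivWithinAt) hbd convex_univ
        (Set.mem_univ t) (Set.mem_univ s)
      simpa [Real.norm_eq_abs] using this
    have k₁ := key ν₁ x₁0 b₁ X₁ Ξ₁ hX₁d hcons₁
    have k₂ := key ν₂ x₂0 b₂ X₂ Ξ₂ hX₂d hcons₂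
    have h1 : |Real.sqrt (F s) - Real.sqrt (F t)| ≤
        Real.sqrt ((X₁ s - X₁ t) ^ 2 + (X₂ s - X₂ t) ^ 2) := by
      simp only [hFdef]
      exact sqrt_rev_triangle _ _ _ _
    have hL₁ : (0:ℝ) ≤ ν₁ ^ 2 * (x₁0 ^ 2 + b₁ ^ 2) := by positivity
    have hL₂ : (0:ℝ) ≤ ν₂ ^ 2 * (x₂0 ^ 2 + b₂ ^ 2) := by positivity
    have e₁ : (X₁ s - X₁ t) ^ 2 ≤ ν₁ ^ 2 * (x₁0 ^ 2 + b₁ ^ 2) * (s - t) ^ 2 := by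
      have h' : |X₁ s - X₁ t| ^ 2 ≤ (Real.sqrt (ν₁ ^ 2 * (x₁0 ^ 2 + b₁ ^ 2)) * |s - t|) ^ 2 :=
        pow_le_pow_left₀ (abs_nonneg _) k₁ 2
      rw [sq_abs, mul_pow, Real.sq_sqrt hL₁, sq_abs] at h'
      exact h'
    have e₂ : (X₂ s - X₂ t) ^ 2 ≤ ν₂ ^ 2 * (x₂0 ^ 2 + b₂ ^ 2) * (s - t) ^ 2 := by
      have h' : |X₂ s - X₂ t| ^ 2 ≤ (Real.sqrt (ν₂ ^ 2 * (x₂0 ^ 2 + b₂ ^ 2)) * |s - t|) ^ 2 :=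
        pow_le_pow_left₀ (abs_nonneg _) k₂ 2
      rw [sq_abs, mul_pow, Real.sq_sqrt hL₂, sq_abs] at h'
      exact h'
    have h2 : Real.sqrt ((X₁ s - X₁ t) ^ 2 + (X₂ s - X₂ t) ^ 2) ≤
        Real.sqrt (2 * p0) * |s - t| := by
      have hsum : (X₁ s - X₁ t) ^ 2 + (X₂ s - X₂ t) ^ 2 ≤ (2 * p0) * (s - t) ^ 2 := by
        rw [h2p0]; linarith
      calc Real.sqrt ((X₁ s - X₁ t) ^ 2 + (X₂ s - X₂ t) ^ 2)
          ≤ Real.sqrt ((2 * p0) * (s - t) ^ 2) := Real.sqrt_le_sqrt hsum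
        _ = Real.sqrt (2 * p0) * |s - t| := by
            rw [Real.sqrt_mul h2p0nn, Real.sqrt_sq_eq_abs]
    simp only [hγE]
    linarith
  -- (b) smoothness away from zeros
  · simp only [hγE]
    intro t ht
    have ht' : Real.sqrt (F t) ≠ 0 := ht
    have hFt0 : F t ≠ 0 := fun h0 => ht' (by rw [h0, Real.sqrt_zero])
    have hFsm : ContDiff ℝ ((⊤ : ℕ∞) : WithTop ℕ∞) F := by
      simp only [hFdef, hX₁def, hX₂def]
      apply ContDiff.add <;> apply ContDiff.pow <;>
        exact (contDiff_const.mul ((contDiff_const.mul contDiff_id).cos)).add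
          (contDiff_const.mul ((contDiff_const.mul contDiff_id).sin))
    exact (((Real.contDiffAt_sqrt hFt0).comp t hFsm.contDiffAt).contDiffWithinAt :)
  -- (c) local finiteness of zeros and critical points
  · intro A B
    have hfin1 := finite_zeros hFana hF_ne A B
    have hfin2 := finite_zeros hHFana hHF_ne A B
    refine Set.Finite.subset (hfin1.union hfin2) ?_
    rintro t ⟨hts, htI⟩
    rcases hts with h0 | hcrit
    · left
      have h0' : γ t = 0 := h0
      rw [hγE] at h0'
      have : F t ≤ 0 := (Real.sqrt_eq_zero' ).1 h0'
      exact ⟨le_antisymm this (hFnn t), htI⟩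
    · right
      obtain ⟨hne', hd0⟩ := hcrit
      have hne'' : Real.sqrt (F t) ≠ 0 := by
        intro h0
        apply hne'
        rw [hγE]
        exact h0
      have hFt0 : F t ≠ 0 := fun h0 => hne'' (by rw [h0, Real.sqrt_zero])
      have hFpos : 0 < F t := lt_of_le_of_ne (hFnn t) (Ne.symm hFt0)
      have hdAt : HasDerivAt (fun u => Real.sqrt (F u)) (1 / (2 * Real.sqrt (F t)) * HF t) t :=
        (Real.hasDerivAt_sqrt hFt0).comp t (hFd t)
      have hd0' : deriv (fun u => Real.sqrt (F u)) t = 0 := by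
        rw [← hγE]; exact hd0
      rw [hdAt.deriv] at hd0'
      have hsp : 0 < Real.sqrt (F t) := Real.sqrt_pos.2 hFpos
      have hHF0 : HF t = 0 := by
        rcases mul_eq_zero.1 hd0' with h' | h'
        · exact absurd h' (by positivity)
        · exact h'
      exact ⟨hHF0, htI⟩
  -- (d) uniformly bounded level sets
  · intro A B
    have hZfin := finite_zeros hHFana hHF_ne A B
    refine ⟨({t : ℝ | HF t = 0} ∩ Set.Icc A B).ncard + 1, ?_⟩
    intro s
    by_cases hs : 0 ≤ s
    · have hTset : {t : ℝ | t ∈ Set.Icc A B ∧ γ t = s}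
          = {t : ℝ | F t - s ^ 2 = 0} ∩ Set.Icc A B := by
        ext u
        simp only [hγE, Set.mem_setOf_eq, Set.mem_inter_iff]
        constructor
        · rintro ⟨hI, hu⟩
          refine ⟨?_, hI⟩
          have : F u = s ^ 2 := by rw [← hu, Real.sq_sqrt (hFnn u)]
          linarith
        · rintro ⟨hu, hI⟩
          refine ⟨hI, ?_⟩
          have h' : F u = s ^ 2 := by linarith
          rw [h', Real.sqrt_sq hs]
      have hgana : ∀ x, AnalyticAt ℝ (fun u => F u - s ^ 2) x :=
        fun x => (hFana x).sub analyticAt_const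
      have hgne : ∃ u, F u - s ^ 2 ≠ 0 := by
        by_contra hcon
        push_neg at hcon
        have hFc : F = fun _ => s ^ 2 := funext fun u => by have := hcon u; linarith
        obtain ⟨w, hw⟩ := hHF_ne
        apply hw
        have hder := (hFd w).deriv
        rw [hFc] at hder
        simpa using hder.symm
      have hTfin : ({t : ℝ | t ∈ Set.Icc A B ∧ γ t = s}).Finite := by
        rw [hTset]
        exact finite_zeros hgana hgne A B
      refine ⟨hTfin, ?_⟩
      apply card_le_rolle hTfin hZfin
      intro a ha b hb hab
      have hFa : F a = s ^ 2 := by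
        have h' := ha.2
        rw [hγE] at h'
        rw [← h', Real.sq_sqrt (hFnn a)]
      have hFb : F b = s ^ 2 := by
        have h' := hb.2
        rw [hγE] at h'
        rw [← h', Real.sq_sqrt (hFnn b)]
      have hcont : ContinuousOn F (Set.Icc a b) :=
        fun u _ => (hFd u).continuousAt.continuousWithinAt
      obtain ⟨c, hc, hc0⟩ := exists_hasDerivAt_eq_zero hab hcont
        (by rw [hFa, hFb]) (fun x _ => hFd x)
      exact ⟨c, ⟨hc0, le_trans ha.1.1 hc.1.le, le_trans hc.2.le hb.1.2⟩, hc.1, hc.2⟩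
    · have hempty : {t : ℝ | t ∈ Set.Icc A B ∧ γ t = s} = ∅ := by
        ext u
        simp only [Set.mem_setOf_eq, Set.mem_empty_iff_false, iff_false, not_and]
        intro _ hu
        rw [hγE] at hu
        apply hs
        rw [← hu]
        exact Real.sqrt_nonneg _
      rw [hempty]
      exact ⟨Set.finite_empty, by simp⟩
end

section
/- Let I = ⋃_n I_n, where (I_n) is a (finite or countable) family of open intervals in [0, ∞) with |I_n| → +∞ if the family is infinite. Then there exists a family (J̃_n) of pairwise disjoint open intervals in [0, ∞) (with |J̃_n| → +∞ if there are infinitely many of them) such that the set Ĩ = ⋃_n J̃_n satisfies: (i) Ĩ ⊆ I; (ii) for every R > 0 the set Ĩ_R ∖ I is bounded, where Ĩ_R = ⋃_{s∈Ĩ}(s−R, s+R); (iii) for every R > 0, κ_⋆(Ĩ) = κ_⋆(Ĩ_R) = κ_⋆(I) = κ_⋆(I_R), where I_R = ⋃_{s∈I}(s−R, s+R). -/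
open MeasureTheory Filter

noncomputable section

/-- `κ_⋆(J) = inf {κ ∈ [0,1] : liminf_{r→+∞} (1/r)|J ∩ [κr, r]| = 0}`. -/
def kappaStar (J : Set ℝ) : ℝ :=
  sInf {κ : ℝ | κ ∈ Set.Icc (0 : ℝ) 1 ∧
    liminf (fun r : ℝ => (volume (J ∩ Set.Icc (κ * r) r)).toReal / r) atTop = 0}

/-- The one-dimensional thickening `J_R = ⋃_{s ∈ J} (s - R, s + R)`. -/
def thickenR (J : Set ℝ) (R : ℝ) : Set ℝ := ⋃ s ∈ J, Set.Ioo (s - R) (s + R)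

namespace S14
open Set


/-- The density ratio. -/
def fA (A : Set ℝ) (κ r : ℝ) : ℝ := (volume (A ∩ Set.Icc (κ * r) r)).toReal / r

def LI (A : Set ℝ) (κ : ℝ) : ℝ := liminf (fun r : ℝ => fA A κ r) atTop

lemma kappaStar_def (A : Set ℝ) :
    kappaStar A = sInf {κ : ℝ | κ ∈ Set.Icc (0:ℝ) 1 ∧ LI A κ = 0} := rfl

lemma vol_window_lt_top (A : Set ℝ) (κ r : ℝ) :
    volume (A ∩ Set.Icc (κ * r) r) < ⊤ :=
  lt_of_le_of_lt (measure_mono inter_subset_right) measure_Icc_lt_top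

lemma vol_window_zero (A : Set ℝ) {κ r : ℝ} (hκ : κ ∈ Set.Icc (0:ℝ) 1) (hr : r ≤ 0) :
    volume (A ∩ Set.Icc (κ * r) r) = 0 := by
  have h1 : volume (A ∩ Set.Icc (κ * r) r) ≤ ENNReal.ofReal (r - κ * r) := by
    refine le_trans (measure_mono inter_subset_right) ?_
    rw [Real.volume_Icc]
  have h2 : r - κ * r ≤ 0 := by nlinarith [hκ.1, hκ.2]
  simpa [ENNReal.ofReal_eq_zero.mpr h2] using h1

lemma fA_nonneg (A : Set ℝ) {κ : ℝ} (hκ : κ ∈ Set.Icc (0:ℝ) 1) (r : ℝ) : 0 ≤ fA A κ r := by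
  rcases le_or_gt r 0 with h | h
  · simp [fA, vol_window_zero A hκ h]
  · exact div_nonneg ENNReal.toReal_nonneg h.le

lemma fA_le_one (A : Set ℝ) {κ : ℝ} (hκ : κ ∈ Set.Icc (0:ℝ) 1) (r : ℝ) : fA A κ r ≤ 1 := by
  rcases le_or_gt r 0 with h | h
  · simp [fA, vol_window_zero A hκ h]
  · have hv : (volume (A ∩ Set.Icc (κ * r) r)).toReal ≤ r := by
      have h1 : volume (A ∩ Set.Icc (κ * r) r) ≤ ENNReal.ofReal (r - κ * r) := by
        refine le_trans (measure_mono inter_subset_right) ?_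
        rw [Real.volume_Icc]
      calc (volume (A ∩ Set.Icc (κ * r) r)).toReal ≤ (ENNReal.ofReal (r - κ * r)).toReal :=
            ENNReal.toReal_mono ENNReal.ofReal_ne_top h1
        _ ≤ r := by
            rw [ENNReal.toReal_ofReal_eq_iff.mpr] <;> nlinarith [hκ.1, hκ.2]
    rw [fA, div_le_one h]
    exact hv

lemma fA_bddUnder (A : Set ℝ) {κ : ℝ} (hκ : κ ∈ Set.Icc (0:ℝ) 1) :
    IsBoundedUnder (· ≥ ·) atTop (fA A κ) :=
  isBoundedUnder_of ⟨0, fun r => fA_nonneg A hκ r⟩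

lemma fA_bddOver (A : Set ℝ) {κ : ℝ} (hκ : κ ∈ Set.Icc (0:ℝ) 1) :
    IsBoundedUnder (· ≤ ·) atTop (fA A κ) :=
  isBoundedUnder_of ⟨1, fun r => fA_le_one A hκ r⟩

lemma LI_nonneg (A : Set ℝ) {κ : ℝ} (hκ : κ ∈ Set.Icc (0:ℝ) 1) : 0 ≤ LI A κ :=
  le_liminf_of_le (fA_bddOver A hκ).isCoboundedUnder_ge
    (Eventually.of_forall (fun r => fA_nonneg A hκ r))

lemma LI_one (A : Set ℝ) : LI A 1 = 0 := by
  have : ∀ r : ℝ, fA A 1 r = 0 := by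
    intro r
    have : volume (A ∩ Set.Icc (1 * r) r) = 0 := by
      refine measure_mono_null inter_subset_right ?_
      rw [one_mul, Real.volume_Icc]
      simp
    simp only [fA, this, ENNReal.toReal_zero, zero_div]
  unfold LI
  simp only [this]
  exact liminf_const 0

lemma ZS_nonempty (A : Set ℝ) :
    {κ : ℝ | κ ∈ Set.Icc (0:ℝ) 1 ∧ LI A κ = 0}.Nonempty :=
  ⟨1, ⟨⟨zero_le_one, le_refl 1⟩, LI_one A⟩⟩

lemma ZS_bddBelow (A : Set ℝ) :
    BddBelow {κ : ℝ | κ ∈ Set.Icc (0:ℝ) 1 ∧ LI A κ = 0} :=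
  ⟨0, fun κ hκ => hκ.1.1⟩

lemma kappaStar_le_of_subset {A B : Set ℝ}
    (h : {κ : ℝ | κ ∈ Set.Icc (0:ℝ) 1 ∧ LI A κ = 0} ⊆
         {κ : ℝ | κ ∈ Set.Icc (0:ℝ) 1 ∧ LI B κ = 0}) :
    kappaStar B ≤ kappaStar A :=
  csInf_le_csInf (ZS_bddBelow B) (ZS_nonempty A) h

lemma LI_mono {A B : Set ℝ} (hAB : A ⊆ B) {κ : ℝ} (hκ : κ ∈ Set.Icc (0:ℝ) 1) :
    LI A κ ≤ LI B κ := by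
  refine liminf_le_liminf (Eventually.of_forall fun r => ?_) (fA_bddUnder A hκ)
    (fA_bddOver B hκ).isCoboundedUnder_ge
  rcases le_or_gt r 0 with h | h
  · simp [fA, vol_window_zero A hκ h, vol_window_zero B hκ h]
  · unfold fA
    have hnum : (volume (A ∩ Set.Icc (κ * r) r)).toReal ≤ (volume (B ∩ Set.Icc (κ * r) r)).toReal :=
      ENNReal.toReal_mono (vol_window_lt_top B κ r).ne
        (measure_mono (inter_subset_inter_left _ hAB))
    exact div_le_div_of_nonneg_right hnum h.le

lemma kappaStar_mono {A B : Set ℝ} (hAB : A ⊆ B) : kappaStar A ≤ kappaStar B := by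
  apply kappaStar_le_of_subset
  rintro κ ⟨hκ, hB⟩
  exact ⟨hκ, le_antisymm (hB ▸ LI_mono hAB hκ) (LI_nonneg A hκ)⟩

/-- Comparison hypothesis: `B`'s window measure is controlled by `A`'s, up to `εr + N`. -/
def Hyp (A B : Set ℝ) (C : ℝ) : Prop :=
  ∀ ε : ℝ, 0 < ε → ∃ N : ℝ, ∀ κ ∈ Set.Icc (0:ℝ) 1, ∀ r : ℝ, 1 ≤ r →
    (volume (B ∩ Set.Icc (κ * r) r)).toReal ≤
      C * (volume (A ∩ Set.Icc (κ * r) r)).toReal + ε * r + N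

lemma LI_zero_of_hyp {A B : Set ℝ} {C : ℝ} (hC : 0 ≤ C) (h : Hyp A B C)
    {κ : ℝ} (hκ : κ ∈ Set.Icc (0:ℝ) 1) (hA : LI A κ = 0) : LI B κ = 0 := by
  refine le_antisymm ?_ (LI_nonneg B hκ)
  have key : ∀ ε' : ℝ, 0 < ε' → LI B κ ≤ 0 + ε' := by
    intro ε' hε'
    rw [zero_add]
    obtain ⟨N, hN⟩ := h (ε'/4) (by positivity)
    set δ : ℝ := ε' / (4*(C+1)) with hδdef
    have hδ : 0 < δ := by positivity
    have hfreq : ∃ᶠ r in atTop, fA A κ r < δ := by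
      apply frequently_lt_of_liminf_lt (fA_bddOver A hκ).isCoboundedUnder_ge
      rw [show liminf (fA A κ) atTop = LI A κ from rfl, hA]; exact hδ
    have hev : ∀ᶠ r in atTop, (1:ℝ) ≤ r ∧ 4*|N|/ε' ≤ r := by
      filter_upwards [eventually_ge_atTop (1:ℝ), eventually_ge_atTop (4*|N|/ε')] with r h1 h2
      exact ⟨h1, h2⟩
    have hfreq2 : ∃ᶠ r in atTop, fA B κ r ≤ ε' := by
      refine (hfreq.and_eventually hev).mono ?_
      rintro r ⟨hr1, hr2, hr3⟩
      have hr0 : (0:ℝ) < r := lt_of_lt_of_le one_pos hr2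
      have hstep : fA B κ r ≤ (C * (volume (A ∩ Set.Icc (κ * r) r)).toReal + ε'/4 * r + N) / r :=
        div_le_div_of_nonneg_right (hN κ hκ r hr2) hr0.le
      have hsplit : (C * (volume (A ∩ Set.Icc (κ * r) r)).toReal + ε'/4 * r + N) / r
          = C * fA A κ r + ε'/4 + N / r := by
        unfold fA
        field_simp [fA]
      rw [hsplit] at hstep
      have h1 : C * fA A κ r ≤ C * δ := mul_le_mul_of_nonneg_left hr1.le hC
      have h2 : C * δ ≤ ε'/4 := by
        have hpos : (0:ℝ) < 4*(C+1) := by positivity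
        rw [hδdef, mul_comm, div_mul_eq_mul_div, div_le_div_iff₀ hpos (by norm_num : (0:ℝ) < 4)]
        nlinarith
      have h3 : N / r ≤ ε'/4 := by
        rw [div_le_iff₀ hr0]
        calc N ≤ |N| := le_abs_self N
          _ ≤ ε'/4 * r := by
              rw [div_le_iff₀ (by positivity : (0:ℝ) < ε')] at hr3
              nlinarith
      linarith
    exact liminf_le_of_frequently_le hfreq2 (fA_bddUnder B hκ)
  exact le_of_forall_pos_le_add key

lemma kappaStar_le_of_hyp {A B : Set ℝ} {C : ℝ} (hC : 0 ≤ C) (h : Hyp A B C) :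
    kappaStar B ≤ kappaStar A :=
  kappaStar_le_of_subset (fun κ hh => ⟨hh.1, LI_zero_of_hyp hC h hh.1 hh.2⟩)

lemma kappaStar_eq_of_hyp {A B : Set ℝ} {C : ℝ} (hC : 0 ≤ C) (hAB : A ⊆ B)
    (h : Hyp A B C) : kappaStar A = kappaStar B :=
  le_antisymm (kappaStar_mono hAB) (kappaStar_le_of_hyp hC h)


/-! ### Thickening basics -/

lemma mem_thickenR {A : Set ℝ} {R x : ℝ} :
    x ∈ thickenR A R ↔ ∃ s ∈ A, x ∈ Set.Ioo (s - R) (s + R) := by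
  simp only [thickenR, mem_iUnion, mem_Ioo, exists_prop]

lemma thickenR_mono {A B : Set ℝ} (R : ℝ) (h : A ⊆ B) : thickenR A R ⊆ thickenR B R := by
  intro x hx
  obtain ⟨s, hs, hx⟩ := mem_thickenR.mp hx
  exact mem_thickenR.mpr ⟨s, h hs, hx⟩

lemma subset_thickenR (A : Set ℝ) {R : ℝ} (hR : 0 < R) : A ⊆ thickenR A R := by
  intro x hx
  exact mem_thickenR.mpr ⟨x, hx, by constructor <;> linarith⟩

lemma thickenR_iUnion (S : ℕ → Set ℝ) (R : ℝ) :
    thickenR (⋃ k, S k) R = ⋃ k, thickenR (S k) R := by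
  ext x
  simp only [mem_thickenR, mem_iUnion]
  constructor
  · rintro ⟨s, ⟨k, hk⟩, hx⟩; exact ⟨k, s, hk, hx⟩
  · rintro ⟨k, s, hk, hx⟩; exact ⟨s, ⟨k, hk⟩, hx⟩

lemma thickenR_empty (R : ℝ) : thickenR ∅ R = ∅ := by simp [thickenR]

lemma thickenR_Ioo_subset {a b R : ℝ} : thickenR (Set.Ioo a b) R ⊆ Set.Ioo (a-R) (b+R) := by
  intro x hx
  obtain ⟨s, hs, hx⟩ := mem_thickenR.mp hx
  exact ⟨by cases hs; cases hx; linarith, by cases hs; cases hx; linarith⟩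

lemma thickenR_Ioi_subset {a R : ℝ} : thickenR (Set.Ioi a) R ⊆ Set.Ioi (a-R) := by
  intro x hx
  obtain ⟨s, hs, hx⟩ := mem_thickenR.mp hx
  simp only [mem_Ioi] at *
  cases hx; linarith

/-- Shape predicate: an open interval (possibly empty or infinite). -/
def Shape (D : Set ℝ) : Prop := ∃ a b : ℝ, D = Set.Ioo a b ∨ D = Set.Ioi a

lemma Shape.ordConnected {D : Set ℝ} (h : Shape D) : D.OrdConnected := by
  obtain ⟨a, b, h | h⟩ := h <;> subst h
  · exact ordConnected_Ioo
  · exact ordConnected_Ioi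

lemma Shape.measurableSet {D : Set ℝ} (h : Shape D) : MeasurableSet D := by
  obtain ⟨a, b, h | h⟩ := h <;> subst h
  · exact measurableSet_Ioo
  · exact measurableSet_Ioi

lemma Shape.vol_thick_diff {D : Set ℝ} (h : Shape D) {R : ℝ} (hR : 0 < R) :
    volume (thickenR D R \ D) ≤ ENNReal.ofReal (2*R) := by
  obtain ⟨a, b, h | h⟩ := h <;> subst h
  · have hsub : thickenR (Set.Ioo a b) R \ Set.Ioo a b ⊆ Set.Icc (a-R) a ∪ Set.Icc b (b+R) := by
      rintro x ⟨hx1, hx2⟩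
      have h1 := thickenR_Ioo_subset hx1
      simp only [mem_Ioo, mem_Icc, mem_union, not_and_or, not_lt] at *
      rcases hx2 with h' | h'
      · exact Or.inl ⟨h1.1.le, h'⟩
      · exact Or.inr ⟨h', h1.2.le⟩
    calc volume (thickenR (Set.Ioo a b) R \ Set.Ioo a b)
        ≤ volume (Set.Icc (a-R) a ∪ Set.Icc b (b+R)) := measure_mono hsub
      _ ≤ volume (Set.Icc (a-R) a) + volume (Set.Icc b (b+R)) := measure_union_le _ _
      _ ≤ ENNReal.ofReal (2*R) := by
          rw [Real.volume_Icc, Real.volume_Icc, ← ENNReal.ofReal_add (by linarith) (by linarith)]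
          apply ENNReal.ofReal_le_ofReal; ring_nf; linarith
  · have hsub : thickenR (Set.Ioi a) R \ Set.Ioi a ⊆ Set.Icc (a-R) a := by
      rintro x ⟨hx1, hx2⟩
      have h1 := thickenR_Ioi_subset hx1
      simp only [mem_Ioi, mem_Icc, not_lt] at *
      exact ⟨h1.le, hx2⟩
    calc volume (thickenR (Set.Ioi a) R \ Set.Ioi a) ≤ volume (Set.Icc (a-R) a) :=
          measure_mono hsub
      _ ≤ ENNReal.ofReal (2*R) := by
          rw [Real.volume_Icc]
          apply ENNReal.ofReal_le_ofReal; linarith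

/-- An ord-connected set avoiding both window endpoints but meeting the window
is contained in the window. -/
lemma subset_window {D : Set ℝ} (hD : D.OrdConnected) {lo hi : ℝ}
    (hW : (D ∩ Set.Icc lo hi).Nonempty) (hlo : lo ∉ D) (hhi : hi ∉ D) :
    D ⊆ Set.Icc lo hi := by
  obtain ⟨w, hwD, hwlo, hwhi⟩ := hW
  intro y hy
  by_contra hyW
  simp only [mem_Icc, not_and_or, not_le] at hyW
  rcases hyW with h' | h'
  · exact hlo (hD.uIcc_subset hy hwD (by rw [Set.mem_uIcc]; left; exact ⟨h'.le, hwlo⟩))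
  · exact hhi (hD.uIcc_subset hy hwD (by rw [Set.mem_uIcc]; right; exact ⟨hwhi, h'.le⟩))

/-! ### Pigeonhole -/

lemma finite_of_disjoint_vol (D : ℕ → Set ℝ) (hm : ∀ k, MeasurableSet (D k))
    (hd : Pairwise (Function.onFun Disjoint D)) (B : Set ℝ) (hBm : MeasurableSet B)
    (hB : volume B < ⊤) {c : ℝ}
    (hc : 0 < c) : {k : ℕ | ENNReal.ofReal c ≤ volume (D k ∩ B)}.Finite := by
  by_contra hinf
  have hinf' : {k : ℕ | ENNReal.ofReal c ≤ volume (D k ∩ B)}.Infinite := hinf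
  set n := ⌊(volume B).toReal / c⌋₊ + 1 with hn
  obtain ⟨F, hFsub, hFcard⟩ := hinf'.exists_subset_card_eq n
  have h1 : (n : ENNReal) * ENNReal.ofReal c ≤ volume B := by
    calc (n : ENNReal) * ENNReal.ofReal c = ∑ _k ∈ F, ENNReal.ofReal c := by
          rw [Finset.sum_const, hFcard, nsmul_eq_mul]
      _ ≤ ∑ k ∈ F, volume (D k ∩ B) := Finset.sum_le_sum (fun k hk => hFsub hk)
      _ = volume (⋃ k ∈ F, D k ∩ B) := by
          refine (measure_biUnion_finset ?_ (fun k _ => (hm k).inter hBm)).symm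
          intro i _ j _ hij
          exact ((hd hij).mono inter_subset_left inter_subset_left)
      _ ≤ volume B := measure_mono (by simp only [iUnion_subset_iff]; intro k _; exact inter_subset_right)
  have h2 : (n:ℝ) * c ≤ (volume B).toReal := by
    have := ENNReal.toReal_mono hB.ne h1
    rwa [ENNReal.toReal_mul, ENNReal.toReal_natCast, ENNReal.toReal_ofReal hc.le] at this
  have h3 : (volume B).toReal / c < (n:ℝ) := by
    rw [hn]; push_cast
    exact Nat.lt_floor_add_one _
  rw [div_lt_iff₀ hc] at h3
  linarith


/-! ### Thickening comparison estimate -/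

lemma hyp_thicken {D : ℕ → Set ℝ} (hsh : ∀ k, Shape (D k))
    (hd : Pairwise (Function.onFun Disjoint D))
    (hfin : ∀ M : ℝ, {k : ℕ | D k ≠ ∅ ∧ volume (D k) ≤ ENNReal.ofReal M}.Finite)
    {R : ℝ} (hR : 0 < R) :
    Hyp (⋃ k, D k) (thickenR (⋃ k, D k) R) 1 := by
  intro ε hε
  set M : ℝ := 2*R/ε with hM
  have hMpos : 0 < M := by positivity
  have hεM : ε * M = 2*R := by rw [hM]; field_simp
  classical
  set Fs : Finset ℕ := (hfin M).toFinset with hFs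
  refine ⟨2*R*((Fs.card : ℝ) + 2) + 2*R, ?_⟩
  intro κ hκ r hr
  set lo := κ * r with hlo
  have hlo0 : 0 ≤ lo := mul_nonneg hκ.1 (by linarith)
  have hlor : lo ≤ r := by
    rw [hlo]; nlinarith [hκ.1, hκ.2]
  set W : Set ℝ := Set.Icc lo r with hW
  set V : Set ℝ := ⋃ k, D k with hV
  have hsing_lo : {k : ℕ | lo ∈ D k}.Subsingleton := fun i hi j hj => by
    by_contra hij
    exact Set.disjoint_left.mp (hd hij) hi hj
  have hsing_hi : {k : ℕ | r ∈ D k}.Subsingleton := fun i hi j hj => by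
    by_contra hij
    exact Set.disjoint_left.mp (hd hij) hi hj
  set Fbad : Finset ℕ := Fs ∪ hsing_lo.finite.toFinset ∪ hsing_hi.finite.toFinset with hFbad
  have hcard : (Fbad.card : ℝ) ≤ (Fs.card : ℝ) + 2 := by
    have h1 : Fbad.card ≤ Fs.card + 2 := by
      calc Fbad.card ≤ (Fs ∪ hsing_lo.finite.toFinset).card + hsing_hi.finite.toFinset.card :=
            Finset.card_union_le _ _
        _ ≤ Fs.card + hsing_lo.finite.toFinset.card + hsing_hi.finite.toFinset.card := by
            have := Finset.card_union_le Fs hsing_lo.finite.toFinset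
            omega
        _ ≤ Fs.card + 2 := by
            have h2 : hsing_lo.finite.toFinset.card ≤ 1 := Finset.card_le_one.mpr
              (fun a ha b hb => hsing_lo (by simpa using ha) (by simpa using hb))
            have h3 : hsing_hi.finite.toFinset.card ≤ 1 := Finset.card_le_one.mpr
              (fun a ha b hb => hsing_hi (by simpa using ha) (by simpa using hb))
            omega
    exact_mod_cast h1
  set T : ℕ → Set ℝ := fun k => if (D k ∩ W).Nonempty then thickenR (D k) R ∩ W else ∅
    with hT
  -- Step 1: covering
  have step1 : thickenR V R ∩ W ⊆ (Set.Icc lo (lo+R) ∪ Set.Icc (r-R) r) ∪ ⋃ k, T k := by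
    rintro x ⟨hx1, hx2⟩
    rw [hV, thickenR_iUnion, mem_iUnion] at hx1
    obtain ⟨k, hxk⟩ := hx1
    by_cases hne : (D k ∩ W).Nonempty
    · refine Or.inr (mem_iUnion.mpr ⟨k, ?_⟩)
      rw [hT]; simp only [if_pos hne]
      exact ⟨hxk, hx2⟩
    · left
      obtain ⟨s, hs, hxs1, hxs2⟩ := mem_thickenR.mp hxk
      have hsW : s ∉ W := fun h => hne ⟨s, hs, h⟩
      rw [hW, mem_Icc, not_and_or, not_le, not_le] at hsW
      rw [hW, mem_Icc] at hx2
      rcases hsW with h' | h'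
      · exact Or.inl ⟨hx2.1, by linarith⟩
      · exact Or.inr ⟨by linarith, hx2.2⟩
  -- Step 2: measure of the cover
  have step2 : volume (thickenR V R ∩ W) ≤
      ENNReal.ofReal R + ENNReal.ofReal R + ∑' k, volume (T k) := by
    calc volume (thickenR V R ∩ W)
        ≤ volume ((Set.Icc lo (lo+R) ∪ Set.Icc (r-R) r) ∪ ⋃ k, T k) := measure_mono step1
      _ ≤ volume (Set.Icc lo (lo+R) ∪ Set.Icc (r-R) r) + volume (⋃ k, T k) :=
          measure_union_le _ _
      _ ≤ volume (Set.Icc lo (lo+R)) + volume (Set.Icc (r-R) r) + volume (⋃ k, T k) := by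
          gcongr
          exact measure_union_le _ _
      _ ≤ ENNReal.ofReal R + ENNReal.ofReal R + ∑' k, volume (T k) := by
          gcongr
          · rw [Real.volume_Icc]; apply ENNReal.ofReal_le_ofReal; linarith
          · rw [Real.volume_Icc]; apply ENNReal.ofReal_le_ofReal; linarith
          · exact measure_iUnion_le _
  -- Step 3: per-index bound
  have step3 : ∀ k, volume (T k) ≤
      volume (D k ∩ W) + ENNReal.ofReal ε * volume (D k ∩ W) +
        Set.indicator (Fbad : Set ℕ) (fun _ => ENNReal.ofReal (2*R)) k := by
    intro k
    by_cases hne : (D k ∩ W).Nonempty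
    · have hTk : T k = thickenR (D k) R ∩ W := by rw [hT]; simp only [if_pos hne]
      have hbase : volume (T k) ≤ volume (D k ∩ W) + ENNReal.ofReal (2*R) := by
        rw [hTk]
        have hcov : thickenR (D k) R ∩ W ⊆ (D k ∩ W) ∪ (thickenR (D k) R \ D k) := by
          rintro x ⟨hx1, hx2⟩
          by_cases hxD : x ∈ D k
          · exact Or.inl ⟨hxD, hx2⟩
          · exact Or.inr ⟨hx1, hxD⟩
        calc volume (thickenR (D k) R ∩ W)
            ≤ volume ((D k ∩ W) ∪ (thickenR (D k) R \ D k)) := measure_mono hcov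
          _ ≤ volume (D k ∩ W) + volume (thickenR (D k) R \ D k) := measure_union_le _ _
          _ ≤ volume (D k ∩ W) + ENNReal.ofReal (2*R) := by
              gcongr
              exact (hsh k).vol_thick_diff hR
      by_cases hbad : k ∈ Fbad
      · rw [Set.indicator_of_mem (by exact_mod_cast hbad)]
        calc volume (T k) ≤ volume (D k ∩ W) + ENNReal.ofReal (2*R) := hbase
          _ ≤ _ := add_le_add_left le_self_add _
      · -- k is a "good" index: D k ⊆ W and volume (D k) > ofReal M
        have hnFs : k ∉ Fs := fun h => hbad (Finset.mem_union.mpr (Or.inl (Finset.mem_union.mpr (Or.inl h))))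
        have hnlo : lo ∉ D k := fun h => hbad (Finset.mem_union.mpr (Or.inl (Finset.mem_union.mpr
          (Or.inr (by simpa using h)))))
        have hnhi : r ∉ D k := fun h => hbad (Finset.mem_union.mpr (Or.inr (by simpa using h)))
        have hsub : D k ⊆ W := subset_window (hsh k).ordConnected hne hnlo hnhi
        have hDne : D k ≠ ∅ := fun h => by
          rw [h] at hne; simp at hne
        have hvol : ENNReal.ofReal M < volume (D k) := by
          by_contra hcon
          push_neg at hcon
          exact hnFs (by rw [hFs, Set.Finite.mem_toFinset]; exact ⟨hDne, hcon⟩)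
        have hDW : D k ∩ W = D k := inter_eq_left.mpr hsub
        rw [Set.indicator_of_notMem (by exact_mod_cast hbad), add_zero]
        calc volume (T k) ≤ volume (D k ∩ W) + ENNReal.ofReal (2*R) := hbase
          _ ≤ volume (D k ∩ W) + ENNReal.ofReal ε * volume (D k ∩ W) := by
              gcongr
              rw [← hεM, ENNReal.ofReal_mul hε.le]
              gcongr
              rw [hDW]
              exact hvol.le
    · have hTk : T k = ∅ := by rw [hT]; simp only [if_neg hne]
      rw [hTk]
      simp
  -- Step 4: sum the per-index bounds
  have hmeas : ∀ k, MeasurableSet (D k ∩ W) := fun k => (hsh k).measurableSet.inter measurableSet_Icc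
  have hdisjW : Pairwise (Function.onFun Disjoint (fun k => D k ∩ W)) := fun i j hij =>
    (hd hij).mono inter_subset_left inter_subset_left
  have hVW : ∑' k, volume (D k ∩ W) = volume (V ∩ W) := by
    rw [hV, iUnion_inter]
    exact (measure_iUnion hdisjW hmeas).symm
  have hind : ∑' k, Set.indicator (Fbad : Set ℕ) (fun _ => ENNReal.ofReal (2*R)) k
      = (Fbad.card : ENNReal) * ENNReal.ofReal (2*R) := by
    have h1 : ∀ b ∉ Fbad, Set.indicator (Fbad : Set ℕ) (fun _ => ENNReal.ofReal (2*R)) b = 0 := by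
      intro b hb
      exact Set.indicator_of_notMem (by simpa using hb) _
    have h2 : ∀ b ∈ Fbad, Set.indicator (Fbad : Set ℕ) (fun _ => ENNReal.ofReal (2*R)) b
        = ENNReal.ofReal (2*R) := by
      intro b hb
      exact Set.indicator_of_mem (by simpa using hb) _
    rw [tsum_eq_sum h1, Finset.sum_congr rfl h2, Finset.sum_const, nsmul_eq_mul]
  have step4 : ∑' k, volume (T k) ≤
      volume (V ∩ W) + ENNReal.ofReal ε * volume (V ∩ W) +
        (Fbad.card : ENNReal) * ENNReal.ofReal (2*R) := by
    calc ∑' k, volume (T k)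
        ≤ ∑' k, (volume (D k ∩ W) + ENNReal.ofReal ε * volume (D k ∩ W) +
            Set.indicator (Fbad : Set ℕ) (fun _ => ENNReal.ofReal (2*R)) k) :=
          ENNReal.tsum_le_tsum step3
      _ = (∑' k, (volume (D k ∩ W) + ENNReal.ofReal ε * volume (D k ∩ W))) +
            ∑' k, Set.indicator (Fbad : Set ℕ) (fun _ => ENNReal.ofReal (2*R)) k := ENNReal.tsum_add
      _ = (∑' k, volume (D k ∩ W)) + (∑' k, ENNReal.ofReal ε * volume (D k ∩ W)) +
            ∑' k, Set.indicator (Fbad : Set ℕ) (fun _ => ENNReal.ofReal (2*R)) k := by rw [ENNReal.tsum_add]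
      _ = volume (V ∩ W) + ENNReal.ofReal ε * volume (V ∩ W) + Fbad.card * ENNReal.ofReal (2*R) := by
          rw [ENNReal.tsum_mul_left, hVW, hind]
  -- Step 5: assemble in ℝ≥0∞
  have hVWr : volume (V ∩ W) ≤ ENNReal.ofReal r := by
    calc volume (V ∩ W) ≤ volume W := measure_mono inter_subset_right
      _ = ENNReal.ofReal (r - lo) := Real.volume_Icc
      _ ≤ ENNReal.ofReal r := ENNReal.ofReal_le_ofReal (by linarith)
  have hcard' : (Fbad.card : ENNReal) * ENNReal.ofReal (2*R) ≤
      ENNReal.ofReal (((Fs.card:ℝ) + 2) * (2*R)) := by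
    have hFsc : (0:ℝ) ≤ (Fs.card:ℝ) + 2 := add_nonneg (Nat.cast_nonneg _) (by norm_num)
    rw [ENNReal.ofReal_mul hFsc]
    have h0 : (Fbad.card : ENNReal) ≤ ENNReal.ofReal ((Fs.card:ℝ) + 2) := by
      rw [show ((Fbad.card : ENNReal)) = ENNReal.ofReal (Fbad.card : ℝ) from
        (ENNReal.ofReal_natCast _).symm]
      exact ENNReal.ofReal_le_ofReal hcard
    exact mul_le_mul_left h0 _
  have main : volume (thickenR V R ∩ W) ≤
      volume (V ∩ W) + ENNReal.ofReal (ε * r + (2*R*((Fs.card:ℝ) + 2) + 2*R)) := by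
    calc volume (thickenR V R ∩ W)
        ≤ ENNReal.ofReal R + ENNReal.ofReal R + ∑' k, volume (T k) := step2
      _ ≤ ENNReal.ofReal R + ENNReal.ofReal R +
            (volume (V ∩ W) + ENNReal.ofReal ε * volume (V ∩ W) +
              (Fbad.card : ENNReal) * ENNReal.ofReal (2*R)) := add_le_add_right step4 _
      _ ≤ ENNReal.ofReal R + ENNReal.ofReal R +
            (volume (V ∩ W) + ENNReal.ofReal ε * ENNReal.ofReal r +
              ENNReal.ofReal (((Fs.card:ℝ) + 2) * (2*R))) :=
          add_le_add_right (add_le_add (add_le_add_right (mul_le_mul_right hVWr _) _) hcard') _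
      _ = volume (V ∩ W) + (ENNReal.ofReal R + ENNReal.ofReal R +
            (ENNReal.ofReal ε * ENNReal.ofReal r + ENNReal.ofReal (((Fs.card:ℝ) + 2) * (2*R)))) := by
          ring
      _ ≤ volume (V ∩ W) + ENNReal.ofReal (ε * r + (2*R*((Fs.card:ℝ) + 2) + 2*R)) := by
          refine add_le_add_right ?_ _
          have hεr : (0:ℝ) ≤ ε * r := mul_nonneg hε.le (le_trans zero_le_one hr)
          have e1 : ENNReal.ofReal ε * ENNReal.ofReal r = ENNReal.ofReal (ε * r) :=
            (ENNReal.ofReal_mul hε.le).symm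
          have e2 : ENNReal.ofReal R + ENNReal.ofReal R +
              (ENNReal.ofReal (ε*r) + ENNReal.ofReal (((Fs.card:ℝ) + 2) * (2*R)))
              = ENNReal.ofReal (R + R + (ε * r + ((Fs.card:ℝ) + 2) * (2*R))) := by
            rw [ENNReal.ofReal_add (show (0:ℝ) ≤ R + R by linarith)
                  (add_nonneg hεr (mul_nonneg
                    (add_nonneg (Nat.cast_nonneg _) (by norm_num)) (by linarith))),
                ENNReal.ofReal_add (show (0:ℝ) ≤ R by linarith) (show (0:ℝ) ≤ R by linarith),
                ENNReal.ofReal_add hεr (mul_nonneg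
                  (add_nonneg (Nat.cast_nonneg _) (by norm_num)) (by linarith))]
          rw [e1, e2]
          apply ENNReal.ofReal_le_ofReal
          nlinarith [Fs.card.cast_nonneg (α := ℝ)]
  -- Step 6: convert to ℝ
  have hfin1 : volume (V ∩ W) ≠ ⊤ := (lt_of_le_of_lt hVWr ENNReal.ofReal_lt_top).ne
  have hrhs : volume (V ∩ W) + ENNReal.ofReal (ε * r + (2*R*((Fs.card:ℝ) + 2) + 2*R)) ≠ ⊤ :=
    ENNReal.add_ne_top.mpr ⟨hfin1, ENNReal.ofReal_ne_top⟩
  have hNn : (0:ℝ) ≤ ε * r + (2*R*((Fs.card:ℝ) + 2) + 2*R) := by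
    have h1 : (0:ℝ) ≤ ε * r := mul_nonneg hε.le (le_trans zero_le_one hr)
    have h2 : (0:ℝ) ≤ (Fs.card:ℝ) := Nat.cast_nonneg _
    nlinarith
  have := ENNReal.toReal_mono hrhs main
  rw [ENNReal.toReal_add hfin1 ENNReal.ofReal_ne_top, ENNReal.toReal_ofReal hNn] at this
  rw [one_mul]
  linarith


/-! ### Order components of an open set -/

def cmp (U : Set ℝ) (x : ℝ) : Set ℝ := {y | Set.uIcc x y ⊆ U}

lemma self_mem_cmp {U : Set ℝ} {x : ℝ} (hx : x ∈ U) : x ∈ cmp U x := by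
  simp only [cmp, mem_setOf_eq, Set.uIcc_self, singleton_subset_iff]
  exact hx

lemma cmp_subset (U : Set ℝ) (x : ℝ) : cmp U x ⊆ U := fun y hy =>
  hy Set.right_mem_uIcc

lemma cmp_eq_of_mem {U : Set ℝ} {x y : ℝ} (hy : y ∈ cmp U x) : cmp U y = cmp U x := by
  ext z
  simp only [cmp, mem_setOf_eq] at *
  constructor
  · intro h
    exact subset_trans Set.uIcc_subset_uIcc_union_uIcc (union_subset hy h)
  · intro h
    refine subset_trans (Set.uIcc_subset_uIcc_union_uIcc (b := x)) (union_subset ?_ h)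
    rw [Set.uIcc_comm]; exact hy

lemma cmp_eq_of_inter {U : Set ℝ} {x y z : ℝ} (hx : z ∈ cmp U x) (hy : z ∈ cmp U y) :
    cmp U x = cmp U y := by
  rw [← cmp_eq_of_mem hx, cmp_eq_of_mem hy]

lemma cmp_icc_subset {U : Set ℝ} {x u v : ℝ} (hu : u ∈ cmp U x) (hv : v ∈ cmp U x) :
    Set.Icc u v ⊆ cmp U x := by
  intro z hz
  have hz' : z ∈ Set.uIcc u v := Set.Icc_subset_uIcc hz
  have hsub : Set.uIcc u v ⊆ Set.uIcc u x ∪ Set.uIcc x v := Set.uIcc_subset_uIcc_union_uIcc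
  rcases hsub hz' with h | h
  · rw [Set.uIcc_comm] at h
    exact fun w hw => hu (Set.uIcc_subset_uIcc Set.left_mem_uIcc h hw)
  · exact fun w hw => hv (Set.uIcc_subset_uIcc Set.left_mem_uIcc h hw)

lemma cmp_isOpen {U : Set ℝ} (hU : IsOpen U) (x : ℝ) : IsOpen (cmp U x) := by
  rw [Metric.isOpen_iff]
  intro y hy
  have hyU : y ∈ U := cmp_subset U x hy
  obtain ⟨δ, hδ, hball⟩ := Metric.isOpen_iff.mp hU y hyU
  refine ⟨δ, hδ, fun y' hy' => ?_⟩
  have h1 : Set.uIcc y y' ⊆ Metric.ball y δ := by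
    rw [Real.ball_eq_Ioo]
    apply ordConnected_Ioo.uIcc_subset
    · rw [Set.mem_Ioo]; constructor <;> simp <;> linarith
    · rwa [← Real.ball_eq_Ioo]
  intro w hw
  rcases Set.uIcc_subset_uIcc_union_uIcc (b := y) hw with h | h
  · exact hy h
  · exact hball (h1 h)

lemma cmp_shape {U : Set ℝ} (hU : IsOpen U) (hU0 : U ⊆ Set.Ioi 0) {x : ℝ} (hx : x ∈ U) :
    ∃ a b : ℝ, 0 ≤ a ∧ (cmp U x = Set.Ioo a b ∨ cmp U x = Set.Ioi a) := by
  set S := cmp U x with hS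
  have hxS : x ∈ S := self_mem_cmp hx
  have hSU : S ⊆ Set.Ioi 0 := subset_trans (cmp_subset U x) hU0
  have hbdd : BddBelow S := ⟨0, fun y hy => (hSU hy).le⟩
  have hne : S.Nonempty := ⟨x, hxS⟩
  set a := sInf S with ha
  have ha0 : 0 ≤ a := le_csInf hne (fun y hy => (hSU hy).le)
  have hanm : a ∉ S := by
    intro haS
    obtain ⟨δ, hδ, hball⟩ := Metric.isOpen_iff.mp (cmp_isOpen hU x) a haS
    have : a - δ/2 ∈ S := hball (by
      simp only [Metric.mem_ball, Real.dist_eq]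
      rw [show a - δ/2 - a = -(δ/2) by ring, abs_neg, abs_of_nonneg (by linarith)]
      linarith)
    have := csInf_le hbdd this
    linarith
  have hmem_of : ∀ y, a < y → (∃ v ∈ S, y < v) → y ∈ S := by
    intro y hay ⟨v, hv, hyv⟩
    obtain ⟨u, hu, huy⟩ := exists_lt_of_csInf_lt hne hay
    exact cmp_icc_subset hu hv ⟨huy.le, hyv.le⟩
  have hgt : ∀ y ∈ S, a < y := fun y hy =>
    lt_of_le_of_ne (csInf_le hbdd hy) (fun h => hanm (h ▸ hy))
  by_cases hba : BddAbove S
  · refine ⟨a, sSup S, ha0, Or.inl ?_⟩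
    ext y
    constructor
    · intro hy
      refine ⟨hgt y hy, ?_⟩
      refine lt_of_le_of_ne (le_csSup hba hy) (fun h => ?_)
      obtain ⟨δ, hδ, hball⟩ := Metric.isOpen_iff.mp (cmp_isOpen hU x) y hy
      have : y + δ/2 ∈ S := hball (by
        simp only [Metric.mem_ball, Real.dist_eq]
        rw [show y + δ/2 - y = δ/2 by ring, abs_of_nonneg (by linarith)]
        linarith)
      have := le_csSup hba this
      rw [h] at this
      linarith
    · rintro ⟨h1, h2⟩
      exact hmem_of y h1 (exists_lt_of_lt_csSup hne h2)
  · refine ⟨a, 0, ha0, Or.inr ?_⟩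
    ext y
    constructor
    · intro hy; exact hgt y hy
    · intro hy
      obtain ⟨v, hv, hyv⟩ := not_bddAbove_iff.mp hba y
      exact hmem_of y hy ⟨v, hv, hyv⟩

/-! ### Enumeration of the components -/

open Classical in
def comps (U : Set ℝ) (e : ℕ → ℚ) (k : ℕ) : Set ℝ :=
  if ((e k : ℝ)) ∈ U ∧ ∀ j < k, ((e j : ℝ)) ∉ cmp U ((e k : ℝ)) then cmp U ((e k : ℝ)) else ∅

lemma comps_cases (U : Set ℝ) (e : ℕ → ℚ) (k : ℕ) :
    comps U e k = ∅ ∨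
      (((e k : ℝ)) ∈ U ∧ comps U e k = cmp U ((e k : ℝ)) ∧
        ∀ j < k, ((e j : ℝ)) ∉ cmp U ((e k : ℝ))) := by
  by_cases h : ((e k : ℝ)) ∈ U ∧ ∀ j < k, ((e j : ℝ)) ∉ cmp U ((e k : ℝ))
  · exact Or.inr ⟨h.1, by rw [comps, if_pos h], h.2⟩
  · exact Or.inl (by rw [comps, if_neg h])

lemma comps_subset (U : Set ℝ) (e : ℕ → ℚ) (k : ℕ) : comps U e k ⊆ U := by
  rcases comps_cases U e k with h | ⟨_, h, _⟩
  · rw [h]; exact empty_subset _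
  · rw [h]; exact cmp_subset _ _

lemma comps_disjoint (U : Set ℝ) (e : ℕ → ℚ) :
    Pairwise (Function.onFun Disjoint (comps U e)) := by
  have key : ∀ i j, i < j → Disjoint (comps U e i) (comps U e j) := by
    intro i j hij
    rcases comps_cases U e i with h | ⟨hiU, hi, _⟩
    · rw [h]; exact disjoint_bot_left
    rcases comps_cases U e j with h | ⟨hjU, hj, hjmin⟩
    · rw [h]; exact disjoint_bot_right
    rw [hi, hj, Set.disjoint_left]
    intro z hzi hzj
    have : cmp U ((e i : ℝ)) = cmp U ((e j : ℝ)) := cmp_eq_of_inter hzi hzj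
    exact hjmin i hij (this ▸ self_mem_cmp hiU)
  intro i j hij
  rcases lt_or_gt_of_ne hij with h | h
  · exact key i j h
  · exact (key j i h).symm

lemma iUnion_comps {U : Set ℝ} (hU : IsOpen U) (hU0 : U ⊆ Set.Ioi 0) {e : ℕ → ℚ}
    (he : Function.Surjective e) : (⋃ k, comps U e k) = U := by
  apply subset_antisymm
  · exact iUnion_subset (fun k => comps_subset U e k)
  · intro x hx
    -- cmp U x contains a rational
    obtain ⟨a, b, _, hsh⟩ := cmp_shape hU hU0 hx
    have hxc : x ∈ cmp U x := self_mem_cmp hx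
    have hrat : ∃ q : ℚ, (q : ℝ) ∈ cmp U x := by
      rcases hsh with h | h
      · rw [h] at hxc ⊢
        obtain ⟨q, hq1, hq2⟩ := exists_rat_btwn hxc.1
        exact ⟨q, hq1, lt_trans hq2 hxc.2⟩
      · rw [h] at hxc ⊢
        obtain ⟨q, hq1, hq2⟩ := exists_rat_btwn (show a < x from hxc)
        exact ⟨q, hq1⟩
    have hTne : {k : ℕ | ((e k : ℝ)) ∈ cmp U x}.Nonempty := by
      obtain ⟨q, hq⟩ := hrat
      obtain ⟨k, hk⟩ := he q
      exact ⟨k, by simp only [mem_setOf_eq, hk]; exact hq⟩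
    set k₀ := sInf {k : ℕ | ((e k : ℝ)) ∈ cmp U x} with hk₀
    have hk₀mem : ((e k₀ : ℝ)) ∈ cmp U x := Nat.sInf_mem hTne
    have hceq : cmp U ((e k₀ : ℝ)) = cmp U x := cmp_eq_of_mem hk₀mem
    have hcond : ((e k₀ : ℝ)) ∈ U ∧ ∀ j < k₀, ((e j : ℝ)) ∉ cmp U ((e k₀ : ℝ)) := by
      refine ⟨cmp_subset U x hk₀mem, fun j hj hmem => ?_⟩
      rw [hceq] at hmem
      exact Nat.notMem_of_lt_sInf hj hmem
    refine mem_iUnion.mpr ⟨k₀, ?_⟩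
    rw [comps, if_pos hcond, hceq]
    exact hxc

lemma comps_shape {U : Set ℝ} (hU : IsOpen U) (hU0 : U ⊆ Set.Ioi 0) (e : ℕ → ℚ) (k : ℕ) :
    ∃ a b : ℝ, 0 ≤ a ∧ (comps U e k = Set.Ioo a b ∨ comps U e k = Set.Ioi a) := by
  rcases comps_cases U e k with h | ⟨hU', h, _⟩
  · exact ⟨0, 0, le_refl 0, Or.inl (by rw [h, Set.Ioo_self])⟩
  · rw [h]; exact cmp_shape hU hU0 hU'

lemma comps_contains {In : ℕ → Set ℝ} (hsh : ∀ n, (In n).OrdConnected) (e : ℕ → ℚ) (k : ℕ)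
    (hne : (comps (⋃ n, In n) e k).Nonempty) :
    ∃ n, (In n).Nonempty ∧ In n ⊆ comps (⋃ n, In n) e k := by
  set U := ⋃ n, In n with hUdef
  obtain ⟨y, hy⟩ := hne
  rcases comps_cases U e k with h | ⟨_, h, _⟩
  · rw [h] at hy; exact absurd hy (notMem_empty y)
  have hyU : y ∈ U := comps_subset U e k hy
  obtain ⟨n, hn⟩ := mem_iUnion.mp hyU
  refine ⟨n, ⟨y, hn⟩, ?_⟩
  have h1 : In n ⊆ cmp U y := by
    intro z hz
    intro w hw
    exact mem_iUnion.mpr ⟨n, (hsh n).uIcc_subset hn hz hw⟩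
  rw [h] at hy ⊢
  rw [← cmp_eq_of_mem hy]
  exact h1

lemma comps_fin {In : ℕ → Set ℝ} (hsh : ∀ n, (In n).OrdConnected)
    (hIlen : ∀ M : ℝ, {n : ℕ | In n ≠ ∅ ∧ volume (In n) ≤ ENNReal.ofReal M}.Finite)
    (e : ℕ → ℚ) (M : ℝ) :
    {k : ℕ | comps (⋃ n, In n) e k ≠ ∅ ∧
      volume (comps (⋃ n, In n) e k) ≤ ENNReal.ofReal M}.Finite := by
  set U := ⋃ n, In n with hUdef
  set T := {n : ℕ | In n ≠ ∅ ∧ volume (In n) ≤ ENNReal.ofReal M} with hT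
  have hsub : {k : ℕ | comps U e k ≠ ∅ ∧ volume (comps U e k) ≤ ENNReal.ofReal M} ⊆
      ⋃ n ∈ T, {k : ℕ | In n ⊆ comps U e k ∧ (In n).Nonempty} := by
    rintro k ⟨hk1, hk2⟩
    obtain ⟨n, hn1, hn2⟩ := comps_contains hsh e k (nonempty_iff_ne_empty.mpr hk1)
    refine mem_iUnion₂.mpr ⟨n, ⟨nonempty_iff_ne_empty.mp hn1, ?_⟩, hn2, hn1⟩
    exact le_trans (measure_mono hn2) hk2
  refine Set.Finite.subset (Set.Finite.biUnion (hIlen M) (fun n _ => ?_)) hsub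
  -- each of these sets is a subsingleton
  apply Set.Subsingleton.finite
  intro k1 hk1 k2 hk2
  by_contra hne
  obtain ⟨y, hy⟩ := hk1.2
  exact Set.disjoint_left.mp (comps_disjoint U e hne) (hk1.1 hy) (hk2.1 hy)


/-! ### Shrinking -/

def elen (S : Set ℝ) : ℝ := min ((volume S).toReal / 4) (Real.sqrt (sInf S))

def shrink (S : Set ℝ) : Set ℝ := {x | Set.Icc (x - elen S) (x + elen S) ⊆ S}

lemma shrink_empty : shrink (∅ : Set ℝ) = ∅ := by
  have he : elen (∅ : Set ℝ) = 0 := by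
    simp [elen, Real.sInf_empty, Real.sqrt_zero]
  ext x
  simp [shrink, he, Set.Icc_self]

lemma elen_Ioo {a b : ℝ} (hab : a < b) :
    elen (Set.Ioo a b) = min ((b - a)/4) (Real.sqrt a) := by
  rw [elen, Real.volume_Ioo, ENNReal.toReal_ofReal (by linarith), csInf_Ioo hab]

lemma elen_Ioo_nonneg {a b : ℝ} (hab : a < b) : 0 ≤ elen (Set.Ioo a b) := by
  rw [elen_Ioo hab]
  exact le_min (by linarith) (Real.sqrt_nonneg a)

lemma shrink_Ioo {a b : ℝ} (hab : a < b) :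
    shrink (Set.Ioo a b) =
      Set.Ioo (a + elen (Set.Ioo a b)) (b - elen (Set.Ioo a b)) := by
  have he := elen_Ioo_nonneg hab
  set e := elen (Set.Ioo a b) with hedef
  ext x
  constructor
  · intro hx
    have h1 := hx (⟨le_refl _, by linarith⟩ : x - e ∈ Set.Icc (x-e) (x+e))
    have h2 := hx (⟨by linarith, le_refl _⟩ : x + e ∈ Set.Icc (x-e) (x+e))
    rw [Set.mem_Ioo] at h1 h2
    exact ⟨by linarith, by linarith⟩
  · rintro ⟨h1, h2⟩ z ⟨hz1, hz2⟩
    exact ⟨by linarith, by linarith⟩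

lemma elen_Ioi (a : ℝ) : elen (Set.Ioi a) = 0 := by
  rw [elen, Real.volume_Ioi]
  simp [Real.sqrt_nonneg]

lemma shrink_Ioi (a : ℝ) : shrink (Set.Ioi a) = Set.Ioi a := by
  ext x
  simp [shrink, elen_Ioi, Set.Icc_self]

lemma Shape.shrink_subset {S : Set ℝ} (h : Shape S) : shrink S ⊆ S := by
  obtain ⟨a, b, h | h⟩ := h <;> subst h
  · rcases lt_or_ge a b with hab | hab
    · rw [shrink_Ioo hab]
      have := elen_Ioo_nonneg hab
      exact Set.Ioo_subset_Ioo (by linarith) (by linarith)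
    · rw [Set.Ioo_eq_empty (not_lt.mpr hab), shrink_empty]
  · rw [shrink_Ioi]

lemma Shape.shrink_shape {S : Set ℝ} (h : Shape S) : Shape (shrink S) := by
  obtain ⟨a, b, h | h⟩ := h <;> subst h
  · rcases lt_or_ge a b with hab | hab
    · rw [shrink_Ioo hab]
      exact ⟨_, _, Or.inl rfl⟩
    · rw [Set.Ioo_eq_empty (not_lt.mpr hab), shrink_empty]
      exact ⟨0, 0, Or.inl (Set.Ioo_self 0).symm⟩
  · rw [shrink_Ioi]
    exact ⟨a, 0, Or.inr rfl⟩

lemma thick_shrink_subset {S : Set ℝ} {R : ℝ} (hRe : R ≤ elen S) :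
    thickenR (shrink S) R ⊆ S := by
  intro x hx
  obtain ⟨s, hs, hx1, hx2⟩ := mem_thickenR.mp hx
  exact hs ⟨by linarith, by linarith⟩

/-! ### The shrinking estimate -/

lemma hyp_shrink {D : ℕ → Set ℝ} (hsh : ∀ k, Shape (D k))
    (hd : Pairwise (Function.onFun Disjoint D)) :
    Hyp (⋃ k, shrink (D k)) (⋃ k, D k) 2 := by
  intro ε hε
  refine ⟨16/ε, ?_⟩
  intro κ hκ r hr
  have hr0 : (0:ℝ) < r := lt_of_lt_of_le one_pos hr
  set lo := κ * r with hlo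
  set W : Set ℝ := Set.Icc lo r with hW
  have hlor : lo ≤ r := by rw [hlo]; nlinarith [hκ.1, hκ.2]
  classical
  have hsing_lo : {k : ℕ | lo ∈ D k}.Subsingleton := fun i hi j hj => by
    by_contra hij
    exact Set.disjoint_left.mp (hd hij) hi hj
  have hsing_hi : {k : ℕ | r ∈ D k}.Subsingleton := fun i hi j hj => by
    by_contra hij
    exact Set.disjoint_left.mp (hd hij) hi hj
  set Fb : Finset ℕ := hsing_lo.finite.toFinset ∪ hsing_hi.finite.toFinset with hFb
  have hcard : Fb.card ≤ 2 := by
    have h2 : hsing_lo.finite.toFinset.card ≤ 1 := Finset.card_le_one.mpr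
      (fun a ha b hb => hsing_lo (by simpa using ha) (by simpa using hb))
    have h3 : hsing_hi.finite.toFinset.card ≤ 1 := Finset.card_le_one.mpr
      (fun a ha b hb => hsing_hi (by simpa using ha) (by simpa using hb))
    calc Fb.card ≤ _ + _ := Finset.card_union_le _ _
      _ ≤ 2 := by omega
  have hsq : (0:ℝ) ≤ Real.sqrt r := Real.sqrt_nonneg r
  -- per-index estimate
  have step3 : ∀ k, volume (D k ∩ W) ≤
      2 * volume (shrink (D k) ∩ W) +
        Set.indicator (Fb : Set ℕ) (fun _ => ENNReal.ofReal (2 * Real.sqrt r)) k := by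
    intro k
    by_cases hne : (D k ∩ W).Nonempty
    swap
    · rw [not_nonempty_iff_eq_empty] at hne
      rw [hne]
      simp
    have hbase : volume (shrink (D k) ∩ W) ≤ 2 * volume (shrink (D k) ∩ W) := by
      nth_rewrite 1 [← one_mul (volume (shrink (D k) ∩ W))]
      exact mul_le_mul_left one_le_two _
    by_cases hsubW : D k ⊆ W
    · -- fully inside the window
      obtain ⟨a, b, hab | hIoi⟩ := hsh k
      swap
      · -- `Ioi a ⊆ W` is impossible
        exfalso
        have hmem : max a r + 1 ∈ D k := by
          rw [hIoi, Set.mem_Ioi]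
          have := le_max_left a r
          linarith
        have h2 := (Set.mem_Icc.mp (hsubW hmem)).2
        have h3 := le_max_right a r
        linarith
      rcases lt_or_ge a b with hlt | hle
      swap
      · exfalso
        rw [hab, Set.Ioo_eq_empty (not_lt.mpr hle)] at hne
        simp at hne
      have he0 := elen_Ioo_nonneg hlt
      have hee : elen (Set.Ioo a b) ≤ (b - a)/4 := by rw [elen_Ioo hlt]; exact min_le_left _ _
      set e := elen (Set.Ioo a b) with hedef
      have hDW : D k ∩ W = D k := inter_eq_left.mpr hsubW
      have hJ : shrink (D k) = Set.Ioo (a + e) (b - e) := by rw [hab, shrink_Ioo hlt]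
      have hJW : shrink (D k) ∩ W = shrink (D k) := by
        apply inter_eq_left.mpr
        intro x hx
        exact hsubW ((hsh k).shrink_subset hx)
      rw [hDW, hJW, hJ, hab, Real.volume_Ioo, Real.volume_Ioo]
      have : (2:ENNReal) * ENNReal.ofReal (b - e - (a + e)) =
          ENNReal.ofReal ((b - e - (a + e)) + (b - e - (a + e))) := by
        rw [two_mul, ENNReal.ofReal_add (by linarith) (by linarith)]
      rw [this]
      refine le_trans (ENNReal.ofReal_le_ofReal (by linarith)) le_self_add
    · -- partially overlapping: k is a bad index
      have hkFb : k ∈ Fb := by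
        by_contra hk
        refine hsubW (subset_window (hsh k).ordConnected hne ?_ ?_)
        · intro hmem
          exact hk (Finset.mem_union.mpr (Or.inl (by simp [hsing_lo.finite.mem_toFinset]; exact hmem)))
        · intro hmem
          exact hk (Finset.mem_union.mpr (Or.inr (by simp [hsing_hi.finite.mem_toFinset]; exact hmem)))
      rw [Set.indicator_of_mem (by exact_mod_cast hkFb)]
      -- crude bound: D k ∩ W ⊆ (shrink (D k) ∩ W) ∪ (D k \ shrink (D k))
      have hcov : D k ∩ W ⊆ (shrink (D k) ∩ W) ∪ (D k \ shrink (D k)) := by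
        rintro x ⟨hx1, hx2⟩
        by_cases hxs : x ∈ shrink (D k)
        · exact Or.inl ⟨hxs, hx2⟩
        · exact Or.inr ⟨hx1, hxs⟩
      have hdiff : volume (D k \ shrink (D k)) ≤ ENNReal.ofReal (2 * Real.sqrt r) := by
        obtain ⟨a, b, hab | hIoi⟩ := hsh k
        swap
        · rw [hIoi, shrink_Ioi]
          simp
        rcases lt_or_ge a b with hlt | hle
        swap
        · rw [hab, Set.Ioo_eq_empty (not_lt.mpr hle)]
          simp
        have he0 := elen_Ioo_nonneg hlt
        have hea : elen (Set.Ioo a b) ≤ Real.sqrt a := by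
          rw [elen_Ioo hlt]; exact min_le_right _ _
        have har : a ≤ r := by
          obtain ⟨w, hw1, hw2⟩ := hne
          rw [hab] at hw1
          have := hw1.1
          have := hw2.2
          linarith
        have hesr : elen (Set.Ioo a b) ≤ Real.sqrt r :=
          le_trans hea (Real.sqrt_le_sqrt har)
        set e := elen (Set.Ioo a b) with hedef
        have hsub2 : D k \ shrink (D k) ⊆ Set.Icc a (a+e) ∪ Set.Icc (b-e) b := by
          rw [hab, shrink_Ioo hlt]
          rintro x ⟨hx1, hx2⟩
          rw [Set.mem_Ioo] at hx1
          rw [Set.mem_Ioo, not_and_or, not_lt, not_lt] at hx2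
          rcases hx2 with h' | h'
          · exact Or.inl ⟨hx1.1.le, by linarith⟩
          · exact Or.inr ⟨by linarith, hx1.2.le⟩
        calc volume (D k \ shrink (D k)) ≤
            volume (Set.Icc a (a+e)) + volume (Set.Icc (b-e) b) :=
              le_trans (measure_mono hsub2) (measure_union_le _ _)
          _ ≤ ENNReal.ofReal (2 * Real.sqrt r) := by
              rw [Real.volume_Icc, Real.volume_Icc,
                ← ENNReal.ofReal_add (by linarith) (by linarith)]
              apply ENNReal.ofReal_le_ofReal
              linarith
      calc volume (D k ∩ W)
          ≤ volume (shrink (D k) ∩ W) + volume (D k \ shrink (D k)) :=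
            le_trans (measure_mono hcov) (measure_union_le _ _)
        _ ≤ 2 * volume (shrink (D k) ∩ W) + ENNReal.ofReal (2 * Real.sqrt r) :=
            add_le_add hbase hdiff
  -- summation
  have hmeas : ∀ k, MeasurableSet (D k ∩ W) := fun k =>
    (hsh k).measurableSet.inter measurableSet_Icc
  have hmeasJ : ∀ k, MeasurableSet (shrink (D k) ∩ W) := fun k =>
    (hsh k).shrink_shape.measurableSet.inter measurableSet_Icc
  have hdisjW : Pairwise (Function.onFun Disjoint (fun k => D k ∩ W)) := fun i j hij =>
    (hd hij).mono inter_subset_left inter_subset_left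
  have hdisjJ : Pairwise (Function.onFun Disjoint (fun k => shrink (D k) ∩ W)) := fun i j hij =>
    (hd hij).mono (inter_subset_left.trans (hsh i).shrink_subset)
      (inter_subset_left.trans (hsh j).shrink_subset)
  have hUW : volume ((⋃ k, D k) ∩ W) = ∑' k, volume (D k ∩ W) := by
    rw [iUnion_inter]
    exact measure_iUnion hdisjW hmeas
  have hJW : volume ((⋃ k, shrink (D k)) ∩ W) = ∑' k, volume (shrink (D k) ∩ W) := by
    rw [iUnion_inter]
    exact measure_iUnion hdisjJ hmeasJ
  have hind : ∑' k, Set.indicator (Fb : Set ℕ) (fun _ => ENNReal.ofReal (2 * Real.sqrt r)) k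
      = (Fb.card : ENNReal) * ENNReal.ofReal (2 * Real.sqrt r) := by
    have h1 : ∀ b ∉ Fb, Set.indicator (Fb : Set ℕ)
        (fun _ => ENNReal.ofReal (2 * Real.sqrt r)) b = 0 := by
      intro b hb
      exact Set.indicator_of_notMem (by simpa using hb) _
    have h2 : ∀ b ∈ Fb, Set.indicator (Fb : Set ℕ)
        (fun _ => ENNReal.ofReal (2 * Real.sqrt r)) b = ENNReal.ofReal (2 * Real.sqrt r) := by
      intro b hb
      exact Set.indicator_of_mem (by simpa using hb) _
    rw [tsum_eq_sum h1, Finset.sum_congr rfl h2, Finset.sum_const, nsmul_eq_mul]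
  have main : volume ((⋃ k, D k) ∩ W) ≤
      2 * volume ((⋃ k, shrink (D k)) ∩ W) + ENNReal.ofReal (4 * Real.sqrt r) := by
    calc volume ((⋃ k, D k) ∩ W) = ∑' k, volume (D k ∩ W) := hUW
      _ ≤ ∑' k, (2 * volume (shrink (D k) ∩ W) +
            Set.indicator (Fb : Set ℕ) (fun _ => ENNReal.ofReal (2 * Real.sqrt r)) k) :=
          ENNReal.tsum_le_tsum step3
      _ = (∑' k, 2 * volume (shrink (D k) ∩ W)) +
            ∑' k, Set.indicator (Fb : Set ℕ) (fun _ => ENNReal.ofReal (2 * Real.sqrt r)) k :=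
          ENNReal.tsum_add
      _ = 2 * volume ((⋃ k, shrink (D k)) ∩ W) +
            (Fb.card : ENNReal) * ENNReal.ofReal (2 * Real.sqrt r) := by
          rw [ENNReal.tsum_mul_left, hJW, hind]
      _ ≤ 2 * volume ((⋃ k, shrink (D k)) ∩ W) + ENNReal.ofReal (4 * Real.sqrt r) := by
          refine add_le_add_right ?_ _
          calc (Fb.card : ENNReal) * ENNReal.ofReal (2 * Real.sqrt r)
              ≤ (2 : ENNReal) * ENNReal.ofReal (2 * Real.sqrt r) := by
                refine mul_le_mul_left ?_ _
                exact_mod_cast hcard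
            _ = ENNReal.ofReal (4 * Real.sqrt r) := by
                rw [show ((2:ENNReal)) = ENNReal.ofReal 2 by norm_num,
                  ← ENNReal.ofReal_mul (by norm_num)]
                ring_nf
  -- convert to ℝ
  have hfinJ : volume ((⋃ k, shrink (D k)) ∩ W) ≠ ⊤ :=
    (lt_of_le_of_lt (measure_mono inter_subset_right) measure_Icc_lt_top).ne
  have hrhs : 2 * volume ((⋃ k, shrink (D k)) ∩ W) + ENNReal.ofReal (4 * Real.sqrt r) ≠ ⊤ := by
    apply ENNReal.add_ne_top.mpr
    constructor
    · exact ENNReal.mul_ne_top (by norm_num) hfinJ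
    · exact ENNReal.ofReal_ne_top
  have hconv := ENNReal.toReal_mono hrhs main
  rw [ENNReal.toReal_add (ENNReal.mul_ne_top (by norm_num) hfinJ) ENNReal.ofReal_ne_top,
    ENNReal.toReal_mul, ENNReal.toReal_ofReal (by linarith)] at hconv
  have htwo : ((2:ENNReal)).toReal = 2 := by norm_num
  rw [htwo] at hconv
  -- 4√r ≤ εr + 16/ε
  have hbound : 4 * Real.sqrt r ≤ ε * r + 16/ε := by
    have hmul : Real.sqrt r * Real.sqrt r = r := Real.mul_self_sqrt hr0.le
    have h16 : 0 < 16/ε := by positivity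
    rcases le_or_gt (Real.sqrt r) (4/ε) with h | h
    · have h1 : 4 * Real.sqrt r ≤ 16/ε := by
        have h0 := mul_le_mul_of_nonneg_left h (by norm_num : (0:ℝ) ≤ 4)
        calc 4 * Real.sqrt r ≤ 4 * (4/ε) := h0
          _ = 16/ε := by ring
      have h2 : 0 ≤ ε * r := mul_nonneg hε.le hr0.le
      linarith
    · rw [div_lt_iff₀ hε] at h
      nlinarith [hsq]
  linarith

end S14

open S14 Set


/-- Shrunk observation set: given a family of open intervals `I_n ⊆ [0,∞)` whose lengths tend
to `+∞` if the family is infinite, there is a family of pairwise disjoint open intervals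
`J̃_n ⊆ [0,∞)` (lengths `→ +∞` if infinitely many) such that `Ĩ = ⋃ J̃_n` satisfies
(i) `Ĩ ⊆ I`; (ii) `Ĩ_R ∖ I` is bounded for every `R > 0`;
(iii) `κ_⋆(Ĩ) = κ_⋆(Ĩ_R) = κ_⋆(I) = κ_⋆(I_R)` for every `R > 0`. -/
theorem stmt_14 (I : ℕ → Set ℝ)
    (hIiv : ∀ n, ∃ a b : ℝ, 0 ≤ a ∧ (I n = Set.Ioo a b ∨ I n = Set.Ioi a))
    (hIlen : ∀ M : ℝ, {n : ℕ | I n ≠ ∅ ∧ volume (I n) ≤ ENNReal.ofReal M}.Finite) :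
    ∃ J : ℕ → Set ℝ,
      (∀ n, ∃ a b : ℝ, 0 ≤ a ∧ (J n = Set.Ioo a b ∨ J n = Set.Ioi a)) ∧
      (Pairwise fun m n => Disjoint (J m) (J n)) ∧
      (∀ M : ℝ, {n : ℕ | J n ≠ ∅ ∧ volume (J n) ≤ ENNReal.ofReal M}.Finite) ∧
      (⋃ n, J n) ⊆ (⋃ n, I n) ∧
      (∀ R : ℝ, 0 < R → Bornology.IsBounded (thickenR (⋃ n, J n) R \ ⋃ n, I n)) ∧
      (∀ R : ℝ, 0 < R →
        kappaStar (⋃ n, J n) = kappaStar (thickenR (⋃ n, J n) R) ∧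
        kappaStar (thickenR (⋃ n, J n) R) = kappaStar (⋃ n, I n) ∧
        kappaStar (⋃ n, I n) = kappaStar (thickenR (⋃ n, I n) R)) := by
  classical
  have hIshape : ∀ n, Shape (I n) := fun n => by
    obtain ⟨a, b, _, h⟩ := hIiv n; exact ⟨a, b, h⟩
  have hUopen : IsOpen (⋃ n, I n) := isOpen_iUnion (fun n => by
    obtain ⟨a, b, h | h⟩ := hIshape n <;> rw [h]
    exacts [isOpen_Ioo, isOpen_Ioi])
  have hU0 : (⋃ n, I n) ⊆ Set.Ioi 0 := iUnion_subset (fun n => by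
    obtain ⟨a, b, ha, h | h⟩ := hIiv n <;> rw [h]
    · intro x hx; exact lt_of_le_of_lt ha hx.1
    · exact Set.Ioi_subset_Ioi ha)
  obtain ⟨e, he⟩ := exists_surjective_nat ℚ
  set Cp : ℕ → Set ℝ := comps (⋃ n, I n) e with hCp
  set J : ℕ → Set ℝ := fun k => shrink (Cp k) with hJdef
  have hCpShape : ∀ k, ∃ a b : ℝ, 0 ≤ a ∧ (Cp k = Set.Ioo a b ∨ Cp k = Set.Ioi a) :=
    fun k => comps_shape hUopen hU0 e k
  have hCpShape' : ∀ k, Shape (Cp k) := fun k => by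
    obtain ⟨a, b, _, h⟩ := hCpShape k; exact ⟨a, b, h⟩
  have hCpdisj : Pairwise (Function.onFun Disjoint Cp) := comps_disjoint _ e
  have hCpU : (⋃ k, Cp k) = ⋃ n, I n := iUnion_comps hUopen hU0 he
  have hIoc : ∀ n, (I n).OrdConnected := fun n => (hIshape n).ordConnected
  have hCpfin : ∀ M : ℝ, {k : ℕ | Cp k ≠ ∅ ∧ volume (Cp k) ≤ ENNReal.ofReal M}.Finite :=
    fun M => comps_fin hIoc hIlen e M
  have hJsub : ∀ k, J k ⊆ Cp k := fun k => (hCpShape' k).shrink_subset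
  have hJU : (⋃ k, J k) ⊆ ⋃ n, I n := by
    rw [← hCpU]
    exact iUnion_mono hJsub
  -- shapes of J
  have hJshape : ∀ k, ∃ a b : ℝ, 0 ≤ a ∧ (J k = Set.Ioo a b ∨ J k = Set.Ioi a) := by
    intro k
    obtain ⟨a, b, ha, h | h⟩ := hCpShape k
    · rcases lt_or_ge a b with hab | hab
      · refine ⟨a + elen (Set.Ioo a b), b - elen (Set.Ioo a b),
          by linarith [elen_Ioo_nonneg hab], Or.inl ?_⟩
        rw [hJdef]; simp only []
        rw [h, shrink_Ioo hab]
      · refine ⟨0, 0, le_refl 0, Or.inl ?_⟩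
        rw [hJdef]; simp only []
        rw [h, Set.Ioo_eq_empty (not_lt.mpr hab), shrink_empty, Set.Ioo_self]
    · refine ⟨a, 0, ha, Or.inr ?_⟩
      rw [hJdef]; simp only []
      rw [h, shrink_Ioi]
  have hJshape' : ∀ k, Shape (J k) := fun k => by
    obtain ⟨a, b, _, h⟩ := hJshape k; exact ⟨a, b, h⟩
  have hJdisj : Pairwise (Function.onFun Disjoint J) := fun i j hij =>
    (hCpdisj hij).mono (hJsub i) (hJsub j)
  -- length finiteness for J
  have hJfin : ∀ M : ℝ, {k : ℕ | J k ≠ ∅ ∧ volume (J k) ≤ ENNReal.ofReal M}.Finite := by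
    intro M
    refine Set.Finite.subset (hCpfin (2 * max M 0)) ?_
    rintro k ⟨hk1, hk2⟩
    have hCpne : Cp k ≠ ∅ := by
      intro hemp
      apply hk1
      rw [← Set.subset_empty_iff, ← hemp]
      exact hJsub k
    refine ⟨hCpne, ?_⟩
    obtain ⟨a, b, ha0, h | h⟩ := hCpShape k
    · rcases lt_or_ge a b with hab | hab
      swap
      · exact absurd (by rw [h, Set.Ioo_eq_empty (not_lt.mpr hab)]) hCpne
      have he0 := elen_Ioo_nonneg hab
      have hee : elen (Set.Ioo a b) ≤ (b - a)/4 := by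
        rw [elen_Ioo hab]; exact min_le_left _ _
      have hJk : J k = Set.Ioo (a + elen (Set.Ioo a b)) (b - elen (Set.Ioo a b)) := by
        rw [hJdef]; simp only []
        rw [h, shrink_Ioo hab]
      set ee := elen (Set.Ioo a b) with heedef
      have hvolJ : volume (J k) = ENNReal.ofReal (b - ee - (a + ee)) := by
        rw [hJk, Real.volume_Ioo]
      rw [hvolJ] at hk2
      have hle : b - ee - (a + ee) ≤ max M 0 := by
        have h1 : ENNReal.ofReal (b - ee - (a + ee)) ≤ ENNReal.ofReal (max M 0) :=
          le_trans hk2 (ENNReal.ofReal_le_ofReal (le_max_left M 0))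
        exact (ENNReal.ofReal_le_ofReal_iff (le_max_right M 0)).mp h1
      rw [h, Real.volume_Ioo]
      apply ENNReal.ofReal_le_ofReal
      linarith
    · exfalso
      have : volume (J k) = ⊤ := by
        rw [hJdef]; simp only []
        rw [h, shrink_Ioi, Real.volume_Ioi]
      rw [this] at hk2
      exact ENNReal.ofReal_ne_top (top_le_iff.mp hk2)
  refine ⟨J, hJshape, hJdisj, hJfin, hJU, ?_, ?_⟩
  · -- (ii) boundedness of the thickened difference
    intro R hR
    set Exc := {k : ℕ | Cp k ≠ ∅ ∧ elen (Cp k) < R} with hExc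
    have hExcFin : Exc.Finite := by
      have hA := hCpfin (4*R)
      have hBsub : {k : ℕ | ∃ a : ℝ, Cp k = Set.Ioi a}.Subsingleton := by
        intro k1 hk1 k2 hk2
        obtain ⟨a1, h1⟩ := hk1
        obtain ⟨a2, h2⟩ := hk2
        by_contra hne
        have hx : max a1 a2 + 1 ∈ Cp k1 ∩ Cp k2 := by
          rw [h1, h2]
          constructor
          · simp only [Set.mem_Ioi]; linarith [le_max_left a1 a2]
          · simp only [Set.mem_Ioi]; linarith [le_max_right a1 a2]
        exact Set.disjoint_left.mp (hCpdisj hne) hx.1 hx.2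
      have hC := finite_of_disjoint_vol Cp (fun k => (hCpShape' k).measurableSet) hCpdisj
        (Set.Ioo (-1) (R*R+4*R+1)) measurableSet_Ioo
        (by rw [Real.volume_Ioo]; exact ENNReal.ofReal_lt_top)
        (by linarith : (0:ℝ) < 4*R)
      refine ((hA.union hBsub.finite).union hC).subset ?_
      rintro k ⟨hk1, hk2⟩
      obtain ⟨a, b, ha0, hsh | hsh⟩ := hCpShape k
      · rcases lt_or_ge a b with hab | hab
        swap
        · exact absurd (by rw [hsh, Set.Ioo_eq_empty (not_lt.mpr hab)]) hk1
        rcases lt_or_ge ((b-a)/4) R with hcase | hcase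
        · -- short component
          refine Or.inl (Or.inl ⟨hk1, ?_⟩)
          rw [hsh, Real.volume_Ioo]
          apply ENNReal.ofReal_le_ofReal
          linarith
        · -- long component starting low
          refine Or.inr ?_
          have hsqa : Real.sqrt a < R := by
            rw [hsh, elen_Ioo hab] at hk2
            rcases min_lt_iff.mp hk2 with h' | h'
            · linarith
            · exact h'
          have haR : a < R*R := by
            have h1 : Real.sqrt a * Real.sqrt a = a := Real.mul_self_sqrt ha0
            nlinarith [Real.sqrt_nonneg a]
          have hsub : Set.Ioo a (a + 4*R) ⊆ Cp k ∩ Set.Ioo (-1) (R*R+4*R+1) := by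
            rintro z ⟨hz1, hz2⟩
            refine ⟨by rw [hsh]; exact ⟨hz1, by linarith⟩, by constructor <;> [linarith; linarith]⟩
          simp only [Set.mem_setOf_eq]
          calc ENNReal.ofReal (4*R) = volume (Set.Ioo a (a + 4*R)) := by
                rw [Real.volume_Ioo]; ring_nf
            _ ≤ volume (Cp k ∩ Set.Ioo (-1) (R*R+4*R+1)) := measure_mono hsub
      · exact Or.inl (Or.inr ⟨a, hsh⟩)
    have hthick : thickenR (⋃ k, J k) R \ (⋃ n, I n) ⊆
        ⋃ k ∈ Exc, (thickenR (J k) R \ (⋃ n, I n)) := by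
      rintro x ⟨hx1, hx2⟩
      rw [thickenR_iUnion, mem_iUnion] at hx1
      obtain ⟨k, hk⟩ := hx1
      have hkE : k ∈ Exc := by
        by_contra hkE
        rcases eq_or_ne (Cp k) ∅ with hemp | hne
        · have : J k = ∅ := by
            rw [hJdef]; simp only []
            rw [hemp, shrink_empty]
          rw [this, thickenR_empty] at hk
          exact absurd hk (notMem_empty x)
        · have hRe : R ≤ elen (Cp k) := by
            by_contra hlt
            exact hkE ⟨hne, not_le.mp hlt⟩
          have : x ∈ Cp k := thick_shrink_subset hRe hk
          exact hx2 (hCpU ▸ mem_iUnion.mpr ⟨k, this⟩)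
      exact mem_iUnion₂.mpr ⟨k, hkE, hk, hx2⟩
    refine Bornology.IsBounded.subset ?_ hthick
    apply (Bornology.isBounded_biUnion hExcFin).mpr
    intro k hk
    obtain ⟨a, b, ha0, hsh | hsh⟩ := hCpShape k
    · refine (Metric.isBounded_Ioo (a - R) (b + R)).subset ?_
      refine subset_trans diff_subset ?_
      refine subset_trans (thickenR_mono R ?_) thickenR_Ioo_subset
      rw [← hsh]; exact hJsub k
    · refine (Metric.isBounded_Icc (a - R) a).subset ?_
      rintro x ⟨hx1, hx2⟩
      have h1 : x ∈ Set.Ioi (a - R) := by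
        refine thickenR_Ioi_subset ?_
        have : J k ⊆ Set.Ioi a := by rw [← hsh]; exact hJsub k
        exact thickenR_mono R this hx1
      have h2 : x ∉ Set.Ioi a := by
        intro hmem
        exact hx2 (hCpU ▸ mem_iUnion.mpr ⟨k, by rw [hsh]; exact hmem⟩)
      rw [Set.mem_Ioi] at h1
      rw [Set.mem_Ioi, not_lt] at h2
      exact ⟨h1.le, h2⟩
  · -- (iii) the kappaStar equalities
    intro R hR
    have hhyp1 : Hyp (⋃ k, J k) (⋃ n, I n) 2 := by
      rw [← hCpU]
      exact hyp_shrink hCpShape' hCpdisj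
    have h1 : kappaStar (⋃ k, J k) = kappaStar (⋃ n, I n) :=
      kappaStar_eq_of_hyp (by norm_num) hJU hhyp1
    have h2 : kappaStar (⋃ n, I n) = kappaStar (thickenR (⋃ n, I n) R) := by
      refine kappaStar_eq_of_hyp zero_le_one (subset_thickenR _ hR) ?_
      rw [← hCpU]
      exact hyp_thicken hCpShape' hCpdisj hCpfin hR
    have h3 : kappaStar (⋃ k, J k) = kappaStar (thickenR (⋃ k, J k) R) :=
      kappaStar_eq_of_hyp zero_le_one (subset_thickenR _ hR)
        (hyp_thicken hJshape' hJdisj hJfin hR)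
    exact ⟨h3, h3.symm.trans h1, h2⟩


end
end

section
/- Let p, q be positive integers and let d₀ ∈ [0, 1]. For λ ∈ [0,1] and s ∈ [0,1] set g_λ(s) = (1−λ)·sin²((π/2)·s·d₀/p) + λ·sin²((π/2)·(1−s)·d₀/q). Then max_{λ∈[0,1]} min_{s∈[0,1]} g_λ(s) = sin²((π/2)·d₀/(p+q)), and the max–min is attained at λ₀ = q/(p+q) and s₀ = p/(p+q), i.e. min_{s∈[0,1]} g_{λ₀}(s) = g_{λ₀}(s₀) = sin²((π/2)·d₀/(p+q)). -/
noncomputable section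

open Real Set

/-- `g_λ(s) = (1-λ) sin²((π/2) s d₀ / p) + λ sin²((π/2)(1-s) d₀ / q)`. -/
def gfun (p q : ℕ) (d₀ l s : ℝ) : ℝ :=
  (1 - l) * Real.sin (Real.pi / 2 * (s * d₀) / (p : ℝ)) ^ 2 +
    l * Real.sin (Real.pi / 2 * ((1 - s) * d₀) / (q : ℝ)) ^ 2

lemma sin_le_sin_aux {x y : ℝ} (hx : 0 ≤ x) (hxy : x ≤ y) (hy : y ≤ π) (hsum : x + y ≤ π) :
    Real.sin x ≤ Real.sin y := by
  have h := Real.sin_sub_sin y x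
  have h1 : 0 ≤ Real.sin ((y - x)/2) :=
    Real.sin_nonneg_of_nonneg_of_le_pi (by linarith) (by linarith)
  have h2 : 0 ≤ Real.cos ((y + x)/2) :=
    Real.cos_nonneg_of_mem_Icc ⟨by nlinarith [Real.pi_pos], by linarith⟩
  nlinarith

lemma gfun_hasDerivAt (p q : ℕ) (hp : (0:ℝ) < p) (hq : (0:ℝ) < q) (d₀ s : ℝ) :
    HasDerivAt (gfun p q d₀ ((q : ℝ) / ((p : ℝ) + q)))
      (Real.pi * d₀ / (2 * ((p:ℝ) + q)) *
        (Real.sin (Real.pi * d₀ * s / p) - Real.sin (Real.pi * d₀ * (1 - s) / q))) s := by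
  have e1 : HasDerivAt (fun x : ℝ => Real.pi / 2 * (x * d₀) / (p : ℝ)) (Real.pi / 2 * d₀ / p) s := by
    simpa using (((hasDerivAt_id s).mul_const d₀).const_mul (Real.pi/2)).div_const (p : ℝ)
  have e2 : HasDerivAt (fun x : ℝ => Real.pi / 2 * ((1 - x) * d₀) / (q : ℝ))
      (-(Real.pi / 2 * d₀ / q)) s := by
    simpa [neg_div] using ((((hasDerivAt_const s (1:ℝ)).sub (hasDerivAt_id s)).mul_const
      d₀).const_mul (Real.pi/2)).div_const (q : ℝ)
  have h := (((e1.sin.pow 2).const_mul (1 - (q : ℝ) / ((p : ℝ) + q))).add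
    ((e2.sin.pow 2).const_mul ((q : ℝ) / ((p : ℝ) + q))))
  refine h.congr_deriv ?_
  have d1 : Real.pi * d₀ * s / p = 2 * (Real.pi / 2 * (s * d₀) / (p:ℝ)) := by
    field_simp
  have d2 : Real.pi * d₀ * (1 - s) / q = 2 * (Real.pi / 2 * ((1 - s) * d₀) / (q:ℝ)) := by
    field_simp
  rw [d1, d2, Real.sin_two_mul, Real.sin_two_mul]
  have hpq : (p:ℝ) + q ≠ 0 := by positivity
  field_simp
  ring

/-- value at `s₀` for any `l` -/
lemma gfun_at_s0 (p q : ℕ) (hp : (0:ℝ) < p) (hq : (0:ℝ) < q) (d₀ l : ℝ) :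
    gfun p q d₀ l ((p : ℝ) / ((p : ℝ) + q)) =
      Real.sin (Real.pi / 2 * d₀ / ((p : ℝ) + q)) ^ 2 := by
  have hpq : (0:ℝ) < (p:ℝ) + q := by linarith
  have a1 : Real.pi / 2 * (((p:ℝ) / ((p:ℝ) + q)) * d₀) / (p:ℝ)
      = Real.pi / 2 * d₀ / ((p:ℝ) + q) := by field_simp
  have a2 : Real.pi / 2 * ((1 - (p:ℝ) / ((p:ℝ) + q)) * d₀) / (q:ℝ)
      = Real.pi / 2 * d₀ / ((p:ℝ) + q) := by field_simp; ring
  unfold gfun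
  rw [a1, a2]; ring

/-- the key lower bound -/
lemma gfun_lower (p q : ℕ) (hp : (0:ℝ) < p) (hq : (0:ℝ) < q) (hp1 : (1:ℝ) ≤ p)
    (hq1 : (1:ℝ) ≤ q) (d₀ : ℝ) (hd0 : 0 ≤ d₀) (hd1 : d₀ ≤ 1) {s : ℝ}
    (hs : s ∈ Set.Icc (0:ℝ) 1) :
    Real.sin (Real.pi / 2 * d₀ / ((p : ℝ) + q)) ^ 2 ≤
      gfun p q d₀ ((q : ℝ) / ((p : ℝ) + q)) s := by
  have hpq : (0:ℝ) < (p:ℝ) + q := by linarith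
  set s₀ : ℝ := (p : ℝ) / ((p : ℝ) + q) with hs₀
  have hs₀0 : 0 ≤ s₀ := by positivity
  have hs₀1 : s₀ ≤ 1 := by rw [hs₀, div_le_one hpq]; linarith
  have hcont : Continuous (gfun p q d₀ ((q : ℝ) / ((p : ℝ) + q))) := by
    unfold gfun; fun_prop
  have hpi := Real.pi_pos
  -- monotone on [s₀, 1]
  have hmono : MonotoneOn (gfun p q d₀ ((q : ℝ) / ((p : ℝ) + q))) (Set.Icc s₀ 1) := by
    apply monotoneOn_of_deriv_nonneg (convex_Icc _ _) hcont.continuousOn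
      (fun x _ => (gfun_hasDerivAt p q hp hq d₀ x).differentiableAt.differentiableWithinAt)
    intro x hx
    rw [interior_Icc] at hx
    rw [(gfun_hasDerivAt p q hp hq d₀ x).deriv]
    apply mul_nonneg (by positivity)
    rw [sub_nonneg]
    have hx1 : x ≤ 1 := hx.2.le
    have hx0 : 0 ≤ x := le_trans hs₀0 hx.1.le
    have hxs : (p:ℝ) ≤ x * ((p:ℝ) + q) := by
      have := hx.1.le
      rw [hs₀, div_le_iff₀ hpq] at this; linarith
    have hdx : d₀ * x ≤ 1 := mul_le_one₀ hd1 hx0 hx1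
    have hdx' : Real.pi * (d₀ * x) ≤ Real.pi * 1 := mul_le_mul_of_nonneg_left hdx hpi.le
    apply sin_le_sin_aux
    · exact div_nonneg (mul_nonneg (mul_nonneg hpi.le hd0) (by linarith)) hq.le
    · rw [div_le_div_iff₀ hq hp]
      nlinarith [mul_nonneg hpi.le hd0]
    · rw [div_le_iff₀ hp]
      nlinarith
    · have t1 : Real.pi * d₀ * (1 - x) / q ≤ Real.pi * d₀ * (1 - x) :=
        div_le_self (mul_nonneg (by positivity) (by linarith)) hq1
      have t2 : Real.pi * d₀ * x / p ≤ Real.pi * d₀ * x :=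
        div_le_self (by positivity) hp1
      nlinarith
  -- antitone on [0, s₀]
  have hanti : AntitoneOn (gfun p q d₀ ((q : ℝ) / ((p : ℝ) + q))) (Set.Icc 0 s₀) := by
    apply antitoneOn_of_deriv_nonpos (convex_Icc _ _) hcont.continuousOn
      (fun x _ => (gfun_hasDerivAt p q hp hq d₀ x).differentiableAt.differentiableWithinAt)
    intro x hx
    rw [interior_Icc] at hx
    rw [(gfun_hasDerivAt p q hp hq d₀ x).deriv]
    apply mul_nonpos_of_nonneg_of_nonpos (by positivity)
    rw [sub_nonpos]
    have hx0 : 0 ≤ x := hx.1.le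
    have hx1 : x ≤ 1 := le_trans hx.2.le hs₀1
    have hxs : x * ((p:ℝ) + q) ≤ (p:ℝ) := by
      have := hx.2.le
      rw [hs₀, le_div_iff₀ hpq] at this; linarith
    have hdx : d₀ * (1 - x) ≤ 1 := mul_le_one₀ hd1 (by linarith) (by linarith)
    have hdx' : Real.pi * (d₀ * (1 - x)) ≤ Real.pi * 1 := mul_le_mul_of_nonneg_left hdx hpi.le
    apply sin_le_sin_aux
    · positivity
    · rw [div_le_div_iff₀ hp hq]
      nlinarith [mul_nonneg hpi.le hd0]
    · rw [div_le_iff₀ hq]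
      nlinarith
    · have t1 : Real.pi * d₀ * (1 - x) / q ≤ Real.pi * d₀ * (1 - x) :=
        div_le_self (mul_nonneg (by positivity) (by linarith)) hq1
      have t2 : Real.pi * d₀ * x / p ≤ Real.pi * d₀ * x :=
        div_le_self (by positivity) hp1
      nlinarith
  rw [← gfun_at_s0 p q hp hq d₀ ((q : ℝ) / ((p : ℝ) + q))]
  rcases le_total s s₀ with h | h
  · exact hanti ⟨hs.1, h⟩ ⟨hs₀0, le_refl _⟩ h
  · exact hmono ⟨le_refl _, hs₀1⟩ ⟨h, hs.2⟩ h

/-- `max_{λ ∈ [0,1]} min_{s ∈ [0,1]} g_λ(s) = sin²((π/2) d₀/(p+q))`, attained at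
`λ₀ = q/(p+q)`, `s₀ = p/(p+q)`. -/
theorem stmt_15 (p q : ℕ) (hp : 0 < p) (hq : 0 < q) (d₀ : ℝ)
    (hd₀ : d₀ ∈ Set.Icc (0 : ℝ) 1) :
    IsGreatest ((fun l : ℝ => sInf (gfun p q d₀ l '' Set.Icc (0 : ℝ) 1)) '' Set.Icc (0 : ℝ) 1)
      (Real.sin (Real.pi / 2 * d₀ / ((p : ℝ) + q)) ^ 2) ∧
    IsLeast (gfun p q d₀ ((q : ℝ) / ((p : ℝ) + q)) '' Set.Icc (0 : ℝ) 1)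
      (Real.sin (Real.pi / 2 * d₀ / ((p : ℝ) + q)) ^ 2) ∧
    gfun p q d₀ ((q : ℝ) / ((p : ℝ) + q)) ((p : ℝ) / ((p : ℝ) + q)) =
      Real.sin (Real.pi / 2 * d₀ / ((p : ℝ) + q)) ^ 2 := by
  obtain ⟨hd0, hd1⟩ := hd₀
  have hP : (0:ℝ) < p := Nat.cast_pos.mpr hp
  have hQ : (0:ℝ) < q := Nat.cast_pos.mpr hq
  have hP1 : (1:ℝ) ≤ p := Nat.one_le_cast.mpr hp
  have hQ1 : (1:ℝ) ≤ q := Nat.one_le_cast.mpr hq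
  have hpq : (0:ℝ) < (p:ℝ) + q := by linarith
  have hs₀mem : (p:ℝ)/((p:ℝ)+q) ∈ Set.Icc (0:ℝ) 1 :=
    ⟨by positivity, by rw [div_le_one hpq]; linarith⟩
  have hleast : IsLeast (gfun p q d₀ ((q:ℝ)/((p:ℝ)+q)) '' Set.Icc (0:ℝ) 1)
      (Real.sin (Real.pi / 2 * d₀ / ((p : ℝ) + q)) ^ 2) := by
    constructor
    · exact ⟨_, hs₀mem, gfun_at_s0 p q hP hQ d₀ _⟩
    · rintro y ⟨s, hsmem, rfl⟩
      exact gfun_lower p q hP hQ hP1 hQ1 d₀ hd0 hd1 hsmem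
  refine ⟨⟨?_, ?_⟩, hleast, gfun_at_s0 p q hP hQ d₀ _⟩
  · exact ⟨(q:ℝ)/((p:ℝ)+q), ⟨by positivity, by rw [div_le_one hpq]; linarith⟩,
      hleast.csInf_eq⟩
  · rintro y ⟨l, hl, rfl⟩
    have hmem : Real.sin (Real.pi / 2 * d₀ / ((p : ℝ) + q)) ^ 2
        ∈ gfun p q d₀ l '' Set.Icc (0:ℝ) 1 := ⟨_, hs₀mem, gfun_at_s0 p q hP hQ d₀ l⟩
    have hbdd : BddBelow (gfun p q d₀ l '' Set.Icc (0:ℝ) 1) := by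
      refine ⟨0, ?_⟩
      rintro y ⟨s, hsmem, rfl⟩
      unfold gfun
      exact add_nonneg (mul_nonneg (by linarith [hl.2]) (sq_nonneg _))
        (mul_nonneg hl.1 (sq_nonneg _))
    exact csInf_le hbdd hmem

end
end

section
/- Let ν₁ > 0, let p, q be coprime positive integers, let ν₂ = (p/q)·ν₁, and set T = 2πq/ν₁ (so that T = 2πp/ν₂). Then for all θ₁, θ₂ ∈ ℝ, the infimum of |t₁ − t₂| over all pairs (t₁, t₂) ∈ ℝ² with sin(ν₁t₁ + θ₁) = 0 and sin(ν₂t₂ + θ₂) = 0 equals (T/(4pq)) · dist((pθ₁ − qθ₂)/(π/2), 2ℤ) = (T/(2pq)) · dist((pθ₁ − qθ₂)/π, ℤ), and this infimum is attained. -/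
open Real Metric

lemma infDist_int_set (x : ℝ) :
    Metric.infDist x {y : ℝ | ∃ k : ℤ, y = (k : ℝ)} = |x - round x| := by
  have hne : Set.Nonempty {y : ℝ | ∃ k : ℤ, y = (k : ℝ)} := ⟨(0:ℝ), ⟨0, by norm_num⟩⟩
  apply le_antisymm
  · have hm : ((round x : ℤ) : ℝ) ∈ {y : ℝ | ∃ k : ℤ, y = (k : ℝ)} := ⟨round x, rfl⟩
    simpa [Real.dist_eq] using Metric.infDist_le_dist_of_mem (x := x) hm
  · by_contra h
    push_neg at h
    obtain ⟨y, ⟨k, rfl⟩, hy⟩ := (Metric.infDist_lt_iff hne).1 h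
    rw [Real.dist_eq] at hy
    exact absurd (round_le x k) (by linarith)

lemma infDist_two_int_set (x : ℝ) :
    Metric.infDist (2 * x) {y : ℝ | ∃ k : ℤ, y = 2 * (k : ℝ)} = 2 * |x - round x| := by
  have hne : Set.Nonempty {y : ℝ | ∃ k : ℤ, y = 2 * (k : ℝ)} := ⟨(0:ℝ), ⟨0, by norm_num⟩⟩
  have habs : ∀ k : ℤ, |2*x - 2*(k:ℝ)| = 2 * |x - k| := by
    intro k
    have h1 : 2*x - 2*(k:ℝ) = 2*(x - k) := by ring
    rw [h1, abs_mul, abs_two]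
  apply le_antisymm
  · have hm : (2 * ((round x : ℤ) : ℝ)) ∈ {y : ℝ | ∃ k : ℤ, y = 2 * (k : ℝ)} :=
      ⟨round x, rfl⟩
    have h2 := Metric.infDist_le_dist_of_mem (x := 2*x) hm
    rw [Real.dist_eq, habs] at h2
    exact h2
  · by_contra h
    push_neg at h
    obtain ⟨y, ⟨k, rfl⟩, hy⟩ := (Metric.infDist_lt_iff hne).1 h
    rw [Real.dist_eq, habs] at hy
    have := round_le x k
    linarith

/-- Minimal distance between zeros of the two coordinate oscillations of a rational
anisotropic harmonic oscillator: with `ν₂ = (p/q) ν₁` (`p, q` coprime) and period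
`T = 2πq/ν₁`, the minimum of `|t₁ - t₂|` over zeros `t₁` of `sin(ν₁ t + θ₁)` and `t₂` of
`sin(ν₂ t + θ₂)` equals `(T/(4pq)) dist((pθ₁ - qθ₂)/(π/2), 2ℤ)
= (T/(2pq)) dist((pθ₁ - qθ₂)/π, ℤ)`, and it is attained. -/
theorem stmt_16 (ν₁ : ℝ) (hν₁ : 0 < ν₁) (p q : ℕ) (hp : 0 < p) (hq : 0 < q)
    (hpq : Nat.Coprime p q) (ν₂ T : ℝ)
    (hν₂ : ν₂ = (p : ℝ) / (q : ℝ) * ν₁) (hT : T = 2 * Real.pi * (q : ℝ) / ν₁)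
    (θ₁ θ₂ : ℝ) :
    IsLeast {r : ℝ | ∃ t₁ t₂ : ℝ,
        Real.sin (ν₁ * t₁ + θ₁) = 0 ∧ Real.sin (ν₂ * t₂ + θ₂) = 0 ∧ r = |t₁ - t₂|}
      (T / (4 * (p : ℝ) * q) *
        Metric.infDist (((p : ℝ) * θ₁ - (q : ℝ) * θ₂) / (Real.pi / 2))
          {y : ℝ | ∃ k : ℤ, y = 2 * (k : ℝ)}) ∧
    T / (4 * (p : ℝ) * q) *
        Metric.infDist (((p : ℝ) * θ₁ - (q : ℝ) * θ₂) / (Real.pi / 2))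
          {y : ℝ | ∃ k : ℤ, y = 2 * (k : ℝ)} =
      T / (2 * (p : ℝ) * q) *
        Metric.infDist (((p : ℝ) * θ₁ - (q : ℝ) * θ₂) / Real.pi)
          {y : ℝ | ∃ k : ℤ, y = (k : ℝ)} := by
  have hπ : (0:ℝ) < Real.pi := Real.pi_pos
  have hπ0 : Real.pi ≠ 0 := ne_of_gt hπ
  have hp0 : ((p:ℝ)) ≠ 0 := by positivity
  have hq0 : ((q:ℝ)) ≠ 0 := by positivity
  have hν₁0 : ν₁ ≠ 0 := ne_of_gt hν₁
  set α : ℝ := (p : ℝ) * θ₁ - (q : ℝ) * θ₂ with hα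
  set x : ℝ := α / Real.pi with hx
  have hxα : α = x * Real.pi := by rw [hx, div_mul_cancel₀ α hπ0]
  have h2x : α / (Real.pi / 2) = 2 * x := by rw [hx]; field_simp
  set d : ℝ := |x - round x| with hd
  have hd0 : 0 ≤ d := abs_nonneg _
  have hI2 : Metric.infDist (α / (Real.pi / 2)) {y : ℝ | ∃ k : ℤ, y = 2 * (k : ℝ)}
      = 2 * d := by rw [h2x]; exact infDist_two_int_set x
  have hI1 : Metric.infDist (α / Real.pi) {y : ℝ | ∃ k : ℤ, y = (k : ℝ)} = d :=
    infDist_int_set x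
  have hval : T / (4 * (p:ℝ) * q) * (2 * d) = d * Real.pi / ((p:ℝ) * ν₁) := by
    rw [hT]; field_simp; ring
  constructor
  · rw [hI2, hval]
    constructor
    · -- membership: construct t₁, t₂
      have hcop : IsCoprime (p : ℤ) (q : ℤ) := by
        rw [Int.isCoprime_iff_gcd_eq_one]
        exact_mod_cast hpq
      obtain ⟨a, b, hab⟩ := hcop
      set k : ℤ := round x with hk
      set m : ℤ := k * a with hm
      set n : ℤ := -(k * b) with hn
      have hmn : (p:ℤ) * m - (q:ℤ) * n = k := by
        rw [hm, hn]
        have : (p:ℤ) * (k * a) - (q:ℤ) * (-(k * b)) = k * (a * p + b * q) := by ring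
        rw [this, hab, mul_one]
      have hν₂0 : ν₂ ≠ 0 := by
        rw [hν₂]; positivity
      refine ⟨((m:ℝ) * Real.pi - θ₁) / ν₁, ((n:ℝ) * Real.pi - θ₂) / ν₂, ?_, ?_, ?_⟩
      · rw [Real.sin_eq_zero_iff]
        exact ⟨m, by field_simp; ring⟩
      · rw [Real.sin_eq_zero_iff]
        exact ⟨n, by field_simp; ring⟩
      · have hdiff : ((m:ℝ) * Real.pi - θ₁) / ν₁ - ((n:ℝ) * Real.pi - θ₂) / ν₂
            = ((k:ℝ) * Real.pi - α) / ((p:ℝ) * ν₁) := by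
          have hk' : ((p:ℤ) * m - (q:ℤ) * n : ℤ) = (k : ℤ) := hmn
          have hk'' : (p:ℝ) * m - (q:ℝ) * n = (k:ℝ) := by exact_mod_cast hk'
          rw [hν₂, hα]
          field_simp
          linear_combination Real.pi * hk''
        rw [hdiff]
        have : (k:ℝ) * Real.pi - α = ((k:ℝ) - x) * Real.pi := by rw [hxα]; ring
        rw [this, abs_div, abs_mul, abs_of_pos hπ, abs_of_pos (by positivity : (0:ℝ) < (p:ℝ) * ν₁)]
        rw [hd, hk, abs_sub_comm]
    · -- lower bound
      rintro r ⟨t₁, t₂, h1, h2, rfl⟩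
      rw [Real.sin_eq_zero_iff] at h1 h2
      obtain ⟨m, hm⟩ := h1
      obtain ⟨n, hn⟩ := h2
      have hn' : (q:ℝ) * ((n:ℝ) * Real.pi) = (p:ℝ) * ν₁ * t₂ + (q:ℝ) * θ₂ := by
        rw [hν₂] at hn
        field_simp at hn
        linear_combination hn
      set j : ℤ := p * m - q * n with hj
      have hkey : (p:ℝ) * ν₁ * (t₁ - t₂) = (j:ℝ) * Real.pi - α := by
        have hj' : (j:ℝ) = (p:ℝ) * m - (q:ℝ) * n := by rw [hj]; push_cast; ring
        rw [hj', hα]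
        linear_combination hn' - (p:ℝ) * hm
      have habs : ((p:ℝ) * ν₁) * |t₁ - t₂| = |(j:ℝ) - x| * Real.pi := by
        have h1 : (j:ℝ) * Real.pi - α = ((j:ℝ) - x) * Real.pi := by rw [hxα]; ring
        calc ((p:ℝ) * ν₁) * |t₁ - t₂|
            = |(p:ℝ) * ν₁ * (t₁ - t₂)| := by
              rw [abs_mul, abs_of_pos (by positivity : (0:ℝ) < (p:ℝ) * ν₁)]
          _ = |((j:ℝ) - x) * Real.pi| := by rw [hkey, h1]
          _ = |(j:ℝ) - x| * Real.pi := by rw [abs_mul, abs_of_pos hπ]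
      have hlb : d ≤ |(j:ℝ) - x| := by
        rw [abs_sub_comm]; exact round_le x j
      rw [div_le_iff₀ (by positivity : (0:ℝ) < (p:ℝ) * ν₁)]
      calc d * Real.pi ≤ |(j:ℝ) - x| * Real.pi := by
            exact mul_le_mul_of_nonneg_right hlb (le_of_lt hπ)
        _ = ((p:ℝ) * ν₁) * |t₁ - t₂| := habs.symm
        _ = |t₁ - t₂| * ((p:ℝ) * ν₁) := by ring
  · rw [hI2, hI1, hT]; field_simp; ring
end

section
/- Let H be a complex Hilbert space and let (U_t)_{t∈ℝ} be a strongly continuous group of unitary operators on H: U_0 = I, U_{t+s} = U_t U_s, each U_t is a surjective linear isometry, and t ↦ U_t u is continuous for each u ∈ H. Let P be a densely defined symmetric linear operator on H with domain D(P) such that: (generator property) whenever the limit w = lim_{ε→0} (U_ε u − u)/ε exists in H, one has u ∈ D(P) and w = −i·P u; (resolvent) there is a compact bounded operator R on H, commuting with every U_t, such that R(Pu − i·u) = u for all u ∈ D(P), and for every v ∈ H one has Rv ∈ D(P) with P(Rv) − i·Rv = v. Let B be a bounded operator on H satisfying the unique continuation property: for every λ ∈ ℝ and every u ∈ D(P),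 if Pu = λu and Bu = 0 then u = 0. Let T₀ > 0 and assume there exist a compact self-adjoint operator K on H and C₀ > 0 such that ‖u‖² ≤ C₀·∫₀^{T₀} ‖B U_t u‖² dt + ⟨u, K u⟩ for all u ∈ H. Then for every T > T₀ there exists C > 0 such that ‖u‖² ≤ C·∫₀^T ‖B U_t u‖² dt for all u ∈ H. -/
open MeasureTheory


open MeasureTheory Filter Metric

section Aux

lemma aux_ultra {X : Type*} [TopologicalSpace X] {C : Set X} (hC : IsCompact C)
    (𝒰 : Ultrafilter ℕ) (f : ℕ → X) (hf : ∀ n, f n ∈ C) :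
    ∃ a ∈ C, Filter.Tendsto f 𝒰 (nhds a) := by
  have h : ↑(Ultrafilter.map f 𝒰) ≤ Filter.principal C := by
    rw [Ultrafilter.coe_map]
    exact Filter.le_principal_iff.2 (Filter.mem_map.2 (by filter_upwards with n using hf n))
  obtain ⟨a, haC, ha⟩ := hC.ultrafilter_le_nhds (𝒰.map f) h
  exact ⟨a, haC, by rwa [Filter.Tendsto, ← Ultrafilter.coe_map]⟩

lemma aux_closure {S : Set ℝ} (hS : IsClosed S) {a b : ℝ} (hab : a < b)
    (h : volume (Set.Ioc a b \ S) = 0) : Set.Icc a b ⊆ S := by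
  have hIoo : Set.Ioo a b ⊆ S := by
    intro t ht
    by_contra hts
    obtain ⟨ε, hε, hball⟩ := Metric.isOpen_iff.1 hS.isOpen_compl t hts
    set c := max a (t - ε) with hc
    set d := min b (t + ε) with hd
    have hsub : Set.Ioo c d ⊆ Set.Ioc a b \ S := by
      intro x hx
      refine ⟨⟨lt_of_le_of_lt (le_max_left _ _) hx.1,
        le_of_lt (lt_of_lt_of_le hx.2 (min_le_left _ _))⟩, ?_⟩
      have : x ∈ Metric.ball t ε := by
        rw [Metric.mem_ball, Real.dist_eq, abs_lt]
        constructor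
        · have := lt_of_le_of_lt (le_max_right _ _) hx.1; linarith
        · have := lt_of_lt_of_le hx.2 (min_le_right _ _); linarith
      exact hball this
    have h0 : volume (Set.Ioo c d) = 0 := measure_mono_null hsub h
    rw [Real.volume_Ioo] at h0
    have hcd : c < d := by
      have h1 : c < t := max_lt ht.1 (by linarith)
      have h2 : t < d := lt_min ht.2 (by linarith)
      linarith
    exact absurd h0 (ne_of_gt (ENNReal.ofReal_pos.2 (by linarith)))
  intro t ht
  have h2 : Set.Icc a b ⊆ closure (Set.Ioo a b) := by
    rw [closure_Ioo hab.ne]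
  exact (closure_minimal hIoo hS) (h2 ht)

lemma aux_fd {H : Type*} [NormedAddCommGroup H] [InnerProductSpace ℂ H] [CompleteSpace H]
    (N : Submodule ℂ H) (hNc : IsClosed (N : Set H)) (K : H →L[ℂ] H)
    (hK : IsCompactOperator ⇑K) (hlow : ∀ v ∈ N, ‖v‖ ≤ ‖K v‖) :
    FiniteDimensional ℂ ↥N := by
  apply FiniteDimensional.of_isCompact_closedBall₀ ℂ (zero_lt_one (α := ℝ))
  have hCb : IsCompact (closure (⇑K '' Metric.closedBall 0 1)) := by
    have h' : IsCompactOperator ⇑(K : H →ₗ[ℂ] H) := hK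
    exact h'.isCompact_closure_image_of_bounded (𝕜₁ := ℂ) Metric.isBounded_closedBall
  apply IsSeqCompact.isCompact
  intro x hx
  have hxn : ∀ n, ‖(x n : H)‖ ≤ 1 := fun n => mem_closedBall_zero_iff.1 (hx n)
  have hxmem : ∀ n, K ((x n : H)) ∈ closure (⇑K '' Metric.closedBall 0 1) := by
    intro n
    exact subset_closure ⟨(x n : H), mem_closedBall_zero_iff.2 (hxn n), rfl⟩
  obtain ⟨y, _, φ, hφ, hy⟩ := hCb.tendsto_subseq hxmem
  have hcauchy : CauchySeq fun n => ((x (φ n)) : H) := by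
    rw [Metric.cauchySeq_iff]
    intro ε hε
    obtain ⟨Nn, hNn⟩ := (Metric.cauchySeq_iff).1 hy.cauchySeq ε hε
    refine ⟨Nn, fun m hm n hn => ?_⟩
    have hmem : ((x (φ m)) : H) - ((x (φ n)) : H) ∈ N := N.sub_mem (x (φ m)).2 (x (φ n)).2
    calc dist ((x (φ m)) : H) ((x (φ n)) : H)
        = ‖((x (φ m)) : H) - ((x (φ n)) : H)‖ := dist_eq_norm _ _
      _ ≤ ‖K (((x (φ m)) : H) - ((x (φ n)) : H))‖ := hlow _ hmem
      _ = dist (K ((x (φ m)) : H)) (K ((x (φ n)) : H)) := by rw [map_sub, ← dist_eq_norm]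
      _ < ε := hNn m hm n hn
  obtain ⟨z, hz⟩ := cauchySeq_tendsto_of_complete hcauchy
  have hzN : z ∈ N := hNc.mem_of_tendsto hz (by filter_upwards with n using (x (φ n)).2)
  have hznorm : ‖z‖ ≤ 1 := by
    have hcont : Filter.Tendsto (fun n => ‖((x (φ n)) : H)‖) atTop (nhds ‖z‖) := hz.norm
    exact le_of_tendsto hcont (by filter_upwards with n using hxn (φ n))
  refine ⟨⟨z, hzN⟩, ?_, φ, hφ, ?_⟩
  · simpa [Metric.mem_closedBall, dist_zero_right] using hznorm
  · rw [tendsto_subtype_rng]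
    exact hz

lemma aux_weak {H : Type*} [NormedAddCommGroup H] [InnerProductSpace ℂ H] [CompleteSpace H]
    (𝒰 : Ultrafilter ℕ) (v : ℕ → H) (hv : ∀ n, ‖v n‖ ≤ 1) :
    ∃ u : H, ∀ w : H, Filter.Tendsto (fun n => (inner ℂ (v n) w : ℂ)) 𝒰 (nhds (inner ℂ u w)) := by
  have key : ∀ w : H, ∃ a : ℂ, ‖a‖ ≤ ‖w‖ ∧
      Tendsto (fun n => (inner ℂ (v n) w : ℂ)) 𝒰 (nhds a) := by
    intro w
    obtain ⟨a, haC, ha⟩ := aux_ultra (isCompact_closedBall (0:ℂ) ‖w‖) 𝒰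
      (fun n => (inner ℂ (v n) w : ℂ))
      (fun n => mem_closedBall_zero_iff.2 (le_trans (norm_inner_le_norm _ _)
        (mul_le_of_le_one_left (norm_nonneg w) (hv n))))
    exact ⟨a, mem_closedBall_zero_iff.1 haC, ha⟩
  choose ψ hψ1 hψ2 using key
  have hadd : ∀ w₁ w₂, ψ (w₁ + w₂) = ψ w₁ + ψ w₂ := fun w₁ w₂ =>
    tendsto_nhds_unique (hψ2 _) (by simpa [inner_add_right] using ((hψ2 w₁).add (hψ2 w₂)))
  have hsmul : ∀ (c : ℂ) (w : H), ψ (c • w) = c * ψ w := fun c w =>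
    tendsto_nhds_unique (hψ2 _) (by simpa [inner_smul_right] using ((hψ2 w).const_mul c))
  let ψL : H →ₗ[ℂ] ℂ :=
    { toFun := ψ, map_add' := hadd, map_smul' := hsmul }
  let ψC : H →L[ℂ] ℂ := LinearMap.mkContinuous ψL 1 (fun w => by rw [one_mul]; exact hψ1 w)
  refine ⟨(InnerProductSpace.toDual ℂ H).symm ψC, fun w => ?_⟩
  have hu : (inner ℂ ((InnerProductSpace.toDual ℂ H).symm ψC) w : ℂ) = ψ w :=
    InnerProductSpace.toDual_symm_apply
  rw [hu]
  exact hψ2 w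

end Aux

set_option maxHeartbeats 4000000 in
/-- Reduction of observability to a weaker inequality with compact remainder: for a strongly
continuous unitary group `U_t` generated by a densely defined symmetric operator `P` with
compact resolvent, which commutes with `U_t`, and a bounded operator `B` satisfying unique
continuation for eigenfunctions of `P`, an observability inequality in time `T₀` up to a
compact self-adjoint remainder `K` implies the full observability inequality in any time
`T > T₀`. -/
theorem stmt_18 {H : Type*} [NormedAddCommGroup H] [InnerProductSpace ℂ H] [CompleteSpace H]
    (U : ℝ → (H ≃ₗᵢ[ℂ] H))
    (hU0 : ∀ u : H, U 0 u = u)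
    (hUgrp : ∀ s t : ℝ, ∀ u : H, U (t + s) u = U t (U s u))
    (hUcont : ∀ u : H, Continuous fun t : ℝ => U t u)
    (D : Submodule ℂ H) (hD : Dense (D : Set H))
    (P : D →ₗ[ℂ] H)
    (hPsym : ∀ u v : D, (inner ℂ (P u) (v : H) : ℂ) = inner ℂ (u : H) (P v))
    (hPgen : ∀ u w : H,
      Filter.Tendsto (fun ε : ℝ => ε⁻¹ • (U ε u - u)) (nhdsWithin 0 {(0 : ℝ)}ᶜ) (nhds w) →
      ∃ hu : u ∈ D, w = (-Complex.I) • P ⟨u, hu⟩)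
    (R : H →L[ℂ] H) (hRcompact : IsCompactOperator R)
    (hRcomm : ∀ (t : ℝ) (u : H), R (U t u) = U t (R u))
    (hR1 : ∀ u : D, R (P u - Complex.I • (u : H)) = u)
    (hR2 : ∀ v : H, ∃ hv : R v ∈ D, P ⟨R v, hv⟩ - Complex.I • R v = v)
    (B : H →L[ℂ] H)
    (hUC : ∀ (l : ℝ) (u : D), P u = (l : ℂ) • (u : H) → B u = 0 → (u : H) = 0)
    (T₀ : ℝ) (hT₀ : 0 < T₀)
    (K : H →L[ℂ] H) (hKcompact : IsCompactOperator K) (hKsa : IsSelfAdjoint K)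
    (C₀ : ℝ) (hC₀ : 0 < C₀)
    (hobs : ∀ u : H, ‖u‖ ^ 2 ≤
      C₀ * (∫ t in (0 : ℝ)..T₀, ‖B (U t u)‖ ^ 2) + (inner ℂ u (K u) : ℂ).re) :
    ∀ T : ℝ, T₀ < T → ∃ C > 0, ∀ u : H,
      ‖u‖ ^ 2 ≤ C * ∫ t in (0 : ℝ)..T, ‖B (U t u)‖ ^ 2 := by
  intro T hTT
  have hT0T : (0:ℝ) < T := hT₀.trans hTT
  -- Basic facts about the group
  have hUinv : ∀ (t : ℝ) (u : H), U t (U (-t) u) = u := by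
    intro t u
    have h := hUgrp (-t) t u
    rw [add_neg_cancel, hU0] at h
    exact h.symm
  have hadj : ∀ (t : ℝ) (a b : H), (inner ℂ (U t a) b : ℂ) = inner ℂ a (U (-t) b) := by
    intro t a b
    conv_lhs => rw [← hUinv t b]
    exact (U t).inner_map_map a (U (-t) b)
  have hcontB : ∀ v : H, Continuous fun t : ℝ => B (U t v) :=
    fun v => B.continuous.comp (hUcont v)
  have hcontI : ∀ v : H, Continuous fun t : ℝ => ‖B (U t v)‖ ^ 2 :=
    fun v => ((hcontB v).norm.pow 2)
  have hInt : ∀ (v : H) (a b : ℝ), IntervalIntegrable (fun t => ‖B (U t v)‖ ^ 2) volume a b :=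
    fun v a b => (hcontI v).intervalIntegrable a b
  have hJnonneg : ∀ (v : H) (b : ℝ), 0 ≤ b → 0 ≤ ∫ t in (0:ℝ)..b, ‖B (U t v)‖ ^ 2 :=
    fun v b hb => intervalIntegral.integral_nonneg hb (fun t _ => by positivity)
  have hscale : ∀ (c : ℂ) (v : H) (b : ℝ),
      (∫ t in (0:ℝ)..b, ‖B (U t (c • v))‖ ^ 2) = ‖c‖^2 * ∫ t in (0:ℝ)..b, ‖B (U t v)‖ ^ 2 := by
    intro c v b
    rw [← intervalIntegral.integral_const_mul]
    apply intervalIntegral.integral_congr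
    intro t _
    simp [_root_.map_smul, norm_smul, mul_pow]
  by_contra hcon
  push_neg at hcon
  -- extract a normalized sequence with rapidly decaying observation
  have hseq : ∀ n : ℕ, ∃ v : H, ‖v‖ = 1 ∧
      (∫ t in (0:ℝ)..T, ‖B (U t v)‖ ^ 2) ≤ (2:ℝ)⁻¹ ^ n := by
    intro n
    obtain ⟨u, hu⟩ := hcon ((2:ℝ) ^ n) (by positivity)
    have hJ : 0 ≤ ∫ t in (0:ℝ)..T, ‖B (U t u)‖ ^ 2 := hJnonneg u T hT0T.le
    have hupos : 0 < ‖u‖ := by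
      rcases eq_or_ne u 0 with h | h
      · exfalso
        rw [h] at hu
        have hz : (fun t : ℝ => ‖B (U t (0:H))‖ ^ 2) = fun _ => (0:ℝ) := by
          funext t; simp
        rw [hz] at hu
        simp at hu
      · exact norm_pos_iff.2 h
    refine ⟨((‖u‖⁻¹ : ℝ) : ℂ) • u, ?_, ?_⟩
    · rw [norm_smul]
      simp [norm_inv, hupos.ne']
    · rw [hscale]
      have hc : ‖((‖u‖⁻¹ : ℝ) : ℂ)‖ = ‖u‖⁻¹ := by
        simp [abs_of_nonneg (inv_nonneg.2 (norm_nonneg u))]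
      rw [hc]
      have h2 : (∫ t in (0:ℝ)..T, ‖B (U t u)‖ ^ 2) ≤ ‖u‖^2 * (2:ℝ)⁻¹^n := by
        have hp : (0:ℝ) < 2^n := by positivity
        rw [inv_pow, ← div_eq_mul_inv, le_div_iff₀ hp]
        nlinarith [hu]
      calc ‖u‖⁻¹^2 * ∫ t in (0:ℝ)..T, ‖B (U t u)‖ ^ 2
          ≤ ‖u‖⁻¹^2 * (‖u‖^2 * (2:ℝ)⁻¹^n) := by
            apply mul_le_mul_of_nonneg_left h2 (by positivity)
        _ = (2:ℝ)⁻¹^n := by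
            field_simp
  choose v hv1 hv2 using hseq
  -- ultrafilter extending atTop
  let 𝒰 : Ultrafilter ℕ := Ultrafilter.of atTop
  have h𝒰 : (𝒰 : Filter ℕ) ≤ atTop := Ultrafilter.of_le atTop
  obtain ⟨u, huw⟩ := aux_weak 𝒰 v (fun n => (hv1 n).le)
  -- strong limit of K (v n)
  have hKC : IsCompact (closure (⇑K '' Metric.closedBall 0 1)) := by
    have h' : IsCompactOperator ⇑(K : H →ₗ[ℂ] H) := hKcompact
    exact h'.isCompact_closure_image_of_bounded (𝕜₁ := ℂ) Metric.isBounded_closedBall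
  obtain ⟨y, -, hKy⟩ := aux_ultra hKC 𝒰 (fun n => K (v n))
    (fun n => subset_closure ⟨v n, mem_closedBall_zero_iff.2 (hv1 n).le, rfl⟩)
  have hyKu : y = K u := by
    have h1 : ∀ w : H, Tendsto (fun n => (inner ℂ (K (v n)) w : ℂ)) 𝒰 (nhds (inner ℂ y w)) :=
      fun w => hKy.inner tendsto_const_nhds
    have h2 : ∀ w : H, Tendsto (fun n => (inner ℂ (K (v n)) w : ℂ)) 𝒰 (nhds (inner ℂ (K u) w)) := by
      intro w
      have hrw : ∀ x : H, (inner ℂ (K x) w : ℂ) = inner ℂ x (K w) := by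
        intro x
        rw [← ContinuousLinearMap.adjoint_inner_right K x w, hKsa.adjoint_eq]
      simp_rw [hrw]
      exact huw (K w)
    have hdiff : ∀ w : H, (inner ℂ (y - K u) w : ℂ) = 0 := by
      intro w
      have h3 := tendsto_nhds_unique (h1 w) (h2 w)
      rw [inner_sub_left, h3, sub_self]
    have h4 := hdiff (y - K u)
    rwa [inner_self_eq_zero, sub_eq_zero] at h4
  -- limit of the quadratic form
  have hKlim : Tendsto (fun n => (inner ℂ (v n) (K (v n)) : ℂ)) 𝒰 (nhds (inner ℂ u (K u))) := by
    have hsplit : ∀ n : ℕ, (inner ℂ (v n) (K (v n)) : ℂ)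
        = inner ℂ (v n) (K (v n) - K u) + inner ℂ (v n) (K u) := by
      intro n; rw [inner_sub_right]; ring
    simp_rw [hsplit]
    have t1 : Tendsto (fun n => (inner ℂ (v n) (K (v n) - K u) : ℂ)) 𝒰 (nhds 0) := by
      have h5 : Tendsto (fun n => K (v n) - K u) 𝒰 (nhds 0) := by
        have h6 := hKy.sub (tendsto_const_nhds (x := K u))
        rwa [hyKu, sub_self] at h6
      refine squeeze_zero_norm (fun n => ?_) (by simpa using h5.norm)
      calc ‖(inner ℂ (v n) (K (v n) - K u) : ℂ)‖ ≤ ‖v n‖ * ‖K (v n) - K u‖ :=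
            norm_inner_le_norm _ _
        _ = ‖K (v n) - K u‖ := by rw [hv1 n, one_mul]
    have t2 := huw (K u)
    simpa using t1.add t2
  -- the observation integrals over [0,T₀] tend to 0
  have hJT₀ : Tendsto (fun n => ∫ t in (0:ℝ)..T₀, ‖B (U t (v n))‖ ^ 2) atTop (nhds 0) := by
    apply squeeze_zero (fun n => hJnonneg (v n) T₀ hT₀.le)
    · intro n
      calc (∫ t in (0:ℝ)..T₀, ‖B (U t (v n))‖ ^ 2)
          ≤ ∫ t in (0:ℝ)..T, ‖B (U t (v n))‖ ^ 2 := by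
            apply intervalIntegral.integral_mono_interval le_rfl hT₀.le hTT.le
            · filter_upwards with t using (by positivity)
            · exact hInt (v n) 0 T
        _ ≤ (2:ℝ)⁻¹ ^ n := hv2 n
    · exact tendsto_pow_atTop_nhds_zero_of_lt_one (by norm_num) (by norm_num)
  -- pass hobs to the limit : 1 ≤ re ⟪u, K u⟫
  have h1le : (1:ℝ) ≤ (inner ℂ u (K u) : ℂ).re := by
    have hre : Tendsto (fun n => C₀ * (∫ t in (0:ℝ)..T₀, ‖B (U t (v n))‖ ^ 2)
        + (inner ℂ (v n) (K (v n)) : ℂ).re) 𝒰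
        (nhds (C₀ * 0 + (inner ℂ u (K u) : ℂ).re)) := by
      apply Tendsto.add
      · exact ((hJT₀.mono_left h𝒰).const_mul C₀)
      · exact (Complex.continuous_re.tendsto _).comp hKlim
    have hb : ∀ n : ℕ, (1:ℝ) ≤ C₀ * (∫ t in (0:ℝ)..T₀, ‖B (U t (v n))‖ ^ 2)
        + (inner ℂ (v n) (K (v n)) : ℂ).re := by
      intro n
      have := hobs (v n)
      rwa [hv1 n, one_pow] at this
    have := ge_of_tendsto' hre hb
    simpa using this
  have hune : u ≠ 0 := by
    intro h
    rw [h] at h1le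
    simp only [inner_zero_left, Complex.zero_re] at h1le
    linarith
  -- almost everywhere on (0,T], the observations of v n tend to 0, hence B (U t u) = 0
  have hsum : (∫⁻ t in Set.Ioc (0:ℝ) T, ∑' n, ENNReal.ofReal (‖B (U t (v n))‖^2)) ≠ ⊤ := by
    rw [lintegral_tsum (fun n =>
      ((hcontI (v n)).measurable.ennreal_ofReal).aemeasurable)]
    have hle : ∀ n : ℕ, (∫⁻ t in Set.Ioc (0:ℝ) T, ENNReal.ofReal (‖B (U t (v n))‖^2))
        ≤ ENNReal.ofReal ((2:ℝ)⁻¹^n) := by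
      intro n
      rw [← ofReal_integral_eq_lintegral_ofReal
        ((hcontI (v n)).integrableOn_Ioc)
        (by filter_upwards with t using (by positivity))]
      apply ENNReal.ofReal_le_ofReal
      rw [← intervalIntegral.integral_of_le hT0T.le]
      exact hv2 n
    have hgeo : (∑' n : ℕ, ENNReal.ofReal ((2:ℝ)⁻¹^n)) ≠ ⊤ := by
      have : ∀ n : ℕ, ENNReal.ofReal ((2:ℝ)⁻¹^n) = (ENNReal.ofReal (2:ℝ)⁻¹)^n := by
        intro n; rw [ENNReal.ofReal_pow (by norm_num)]
      rw [tsum_congr this, ENNReal.tsum_geometric]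
      have h2 : ENNReal.ofReal (2:ℝ)⁻¹ < 1 := by
        rw [ENNReal.ofReal_lt_one]; norm_num
      exact (ENNReal.inv_lt_top.2 (tsub_pos_of_lt h2)).ne
    exact ne_top_of_le_ne_top hgeo (ENNReal.tsum_le_tsum hle)
  have hae2 : ∀ᵐ t ∂(volume.restrict (Set.Ioc (0:ℝ) T)), B (U t u) = 0 := by
    have hae1 := ae_lt_top (Measurable.ennreal_tsum (fun n =>
      (hcontI (v n)).measurable.ennreal_ofReal)) hsum
    filter_upwards [hae1] with t ht
    have hterm : Tendsto (fun n => ENNReal.ofReal (‖B (U t (v n))‖^2)) atTop (nhds 0) :=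
      ENNReal.tendsto_atTop_zero_of_tsum_ne_top ht.ne
    have hterm2 : Tendsto (fun n => ‖B (U t (v n))‖^2) atTop (nhds 0) := by
      have h7 := (ENNReal.tendsto_toReal (a := 0) (by simp)).comp hterm
      have heq : ∀ n : ℕ, (ENNReal.ofReal (‖B (U t (v n))‖^2)).toReal = ‖B (U t (v n))‖^2 :=
        fun n => ENNReal.toReal_ofReal (by positivity)
      simpa [Function.comp_def, heq] using h7
    have hnorm : Tendsto (fun n => ‖B (U t (v n))‖) atTop (nhds 0) := by
      have h8 := (Real.continuous_sqrt.tendsto 0).comp hterm2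
      have heq : ∀ n : ℕ, Real.sqrt (‖B (U t (v n))‖^2) = ‖B (U t (v n))‖ :=
        fun n => Real.sqrt_sq (norm_nonneg _)
      simpa [Function.comp_def, heq, Real.sqrt_zero] using h8
    have hlim1 : Tendsto (fun n => (inner ℂ (B (U t (v n))) (B (U t u)) : ℂ)) 𝒰 (nhds 0) := by
      refine squeeze_zero_norm (fun n => norm_inner_le_norm _ _)
        (by simpa using ((hnorm.mono_left h𝒰)).mul_const ‖B (U t u)‖)
    have hlim2 : Tendsto (fun n => (inner ℂ (B (U t (v n))) (B (U t u)) : ℂ)) 𝒰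
        (nhds (inner ℂ (B (U t u)) (B (U t u)))) := by
      have hrw : ∀ x : H, (inner ℂ (B (U t x)) (B (U t u)) : ℂ)
          = inner ℂ x (U (-t) (ContinuousLinearMap.adjoint B (B (U t u)))) := by
        intro x
        rw [← ContinuousLinearMap.adjoint_inner_right B (U t x) (B (U t u))]
        exact hadj t x _
      simp_rw [hrw]
      exact huw _
    have h10 : (inner ℂ (B (U t u)) (B (U t u)) : ℂ) = 0 := tendsto_nhds_unique hlim2 hlim1
    exact inner_self_eq_zero.1 h10
  have huN : ∀ t ∈ Set.Icc (0:ℝ) T, B (U t u) = 0 := by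
    have hclosed : IsClosed {t : ℝ | B (U t u) = 0} := isClosed_eq (hcontB u) continuous_const
    apply aux_closure hclosed hT0T
    have h11 := ae_iff.1 hae2
    rw [Measure.restrict_apply₀] at h11
    · convert h11 using 2
      ext t
      simp [Set.mem_diff, Set.mem_setOf_eq, and_comm]
    · exact (hclosed.measurableSet.compl).nullMeasurableSet
  -- the family of invariant kernels
  let NN : ℝ → Submodule ℂ H := fun a =>
    { carrier := {x : H | ∀ t ∈ Set.Icc (0:ℝ) a, B (U t x) = 0}
      add_mem' := fun hx hy t ht => by
        rw [map_add, map_add, hx t ht, hy t ht, add_zero]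
      zero_mem' := fun t ht => by rw [map_zero, map_zero]
      smul_mem' := fun c x hx t ht => by
        rw [_root_.map_smul, _root_.map_smul, hx t ht, smul_zero] }
  have hNmem : ∀ (a : ℝ) (x : H), x ∈ NN a ↔ ∀ t ∈ Set.Icc (0:ℝ) a, B (U t x) = 0 :=
    fun a x => Iff.rfl
  have hNclosed : ∀ a : ℝ, IsClosed ((NN a : Set H)) := by
    intro a
    have heq : ((NN a : Set H)) = ⋂ t ∈ Set.Icc (0:ℝ) a, {x : H | B (U t x) = 0} := by
      ext x
      simp only [Set.mem_iInter, Set.mem_setOf_eq]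
      exact hNmem a x
    rw [heq]
    exact isClosed_biInter (fun t ht =>
      isClosed_eq (B.continuous.comp (U t).continuous) continuous_const)
  have hNanti : ∀ a b : ℝ, a ≤ b → NN b ≤ NN a :=
    fun a b hab x hx t ht => hx t ⟨ht.1, ht.2.trans hab⟩
  have hKlow : ∀ a : ℝ, T₀ ≤ a → ∀ x ∈ NN a, ‖x‖ ≤ ‖K x‖ := by
    intro a ha x hx
    have hzero : (∫ t in (0:ℝ)..T₀, ‖B (U t x)‖ ^ 2) = 0 := by
      have hEq : Set.EqOn (fun t => ‖B (U t x)‖ ^ 2) (fun _ => (0:ℝ)) (Set.uIcc (0:ℝ) T₀) := by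
        intro t ht
        rw [Set.uIcc_of_le hT₀.le] at ht
        simp only
        rw [hx t ⟨ht.1, ht.2.trans ha⟩]
        simp
      rw [intervalIntegral.integral_congr hEq]
      simp
    have h12 := hobs x
    rw [hzero, mul_zero, zero_add] at h12
    have h13 : (inner ℂ x (K x) : ℂ).re ≤ ‖x‖ * ‖K x‖ := by
      calc (inner ℂ x (K x) : ℂ).re ≤ ‖(inner ℂ x (K x) : ℂ)‖ := Complex.re_le_norm _
        _ = ‖(inner ℂ x (K x) : ℂ)‖ := rfl
        _ ≤ ‖x‖ * ‖K x‖ := norm_inner_le_norm _ _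
    rcases eq_or_lt_of_le (norm_nonneg x) with h0 | h0
    · rw [← h0]; exact norm_nonneg _
    · rw [pow_two] at h12
      nlinarith [le_trans h12 h13]
  have hNfd : ∀ a : ℝ, T₀ ≤ a → FiniteDimensional ℂ ↥(NN a) :=
    fun a ha => aux_fd (NN a) (hNclosed a) K hKcompact (hKlow a ha)
  -- choose T₁ minimizing the rank on (T₀, T)
  let SS : Set ℕ := {k | ∃ s ∈ Set.Ioo T₀ T, Module.finrank ℂ ↥(NN s) = k}
  have hSne : SS.Nonempty := ⟨_, ⟨(T₀+T)/2, ⟨by linarith, by linarith⟩, rfl⟩⟩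
  obtain ⟨T₁, hT₁mem, hT₁rank⟩ : ∃ s ∈ Set.Ioo T₀ T, Module.finrank ℂ ↥(NN s) = sInf SS :=
    Nat.sInf_mem hSne
  have hmin : ∀ s ∈ Set.Ioo T₀ T, sInf SS ≤ Module.finrank ℂ ↥(NN s) :=
    fun s hs => Nat.sInf_le ⟨s, hs, rfl⟩
  have hconst : ∀ s, T₁ ≤ s → s < T → NN s = NN T₁ := by
    intro s hs1 hs2
    have hle : NN s ≤ NN T₁ := hNanti T₁ s hs1
    haveI := hNfd T₁ hT₁mem.1.le
    apply Submodule.eq_of_le_of_finrank_le hle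
    rw [hT₁rank]
    exact hmin s ⟨hT₁mem.1.trans_le hs1, hs2⟩
  have hNT : NN T₁ ≤ NN T := by
    intro x hx t ht
    have hclosed : IsClosed {r : ℝ | B (U r x) = 0} :=
      isClosed_eq (B.continuous.comp (hUcont x)) continuous_const
    have hIco : Set.Ico (0:ℝ) T ⊆ {r : ℝ | B (U r x) = 0} := by
      intro r hr
      rcases le_or_gt r T₁ with h | h
      · exact hx r ⟨hr.1, h⟩
      · have hmem : x ∈ NN (max T₁ r) := by
          rw [hconst (max T₁ r) (le_max_left _ _) (max_lt hT₁mem.2 hr.2)]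
          exact hx
        exact hmem r ⟨hr.1, le_max_right _ _⟩
    have hsub : Set.Icc (0:ℝ) T ⊆ closure (Set.Ico (0:ℝ) T) := by
      rw [closure_Ico hT0T.ne]
    exact (closure_minimal hIco hclosed) (hsub ht)
  have hNeq : NN T₁ = NN T := le_antisymm hNT (hNanti T₁ T hT₁mem.2.le)
  set δ := T - T₁ with hδ
  have hδpos : 0 < δ := by rw [hδ]; linarith [hT₁mem.2]
  have hUinvariant : ∀ s, 0 ≤ s → s ≤ δ → ∀ x ∈ NN T, U s x ∈ NN T := by
    intro s hs0 hsδ x hx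
    rw [← hNeq]
    intro t ht
    have h14 : B (U (t + s) x) = 0 := hx (t + s) ⟨by linarith [ht.1], by
      have h15 := ht.2
      rw [hδ] at hsδ
      linarith⟩
    rw [hUgrp s t x] at h14
    exact h14
  -- generator: every element of NN T lies in D, with P mapping into NN T
  haveI : CompleteSpace ↥(NN T) := (hNclosed T).completeSpace_coe
  have hIntU : ∀ (x : H) (a b : ℝ), IntervalIntegrable (fun s => U s x) volume a b :=
    fun x a b => (hUcont x).intervalIntegrable a b
  have hG : ∀ (x : H) (b : ℝ), HasDerivAt (fun z => ∫ s in (0:ℝ)..z, U s x) (U b x) b := by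
    intro x b
    exact intervalIntegral.integral_hasDerivAt_right (hIntU x 0 b)
      ((hUcont x).stronglyMeasurableAtFilter _ _) (hUcont x).continuousAt
  have hintmem : ∀ (x : H) (ε : ℝ), x ∈ NN T → 0 < ε → ε ≤ δ →
      (∫ s in (0:ℝ)..ε, U s x) ∈ NN T := by
    intro x ε hx hε hεδ
    set π : H →L[ℂ] H := (NN T).subtypeL.comp ((NN T).orthogonalProjectionOnto) with hπdef
    have hπmem : ∀ z : H, π z ∈ NN T := fun z => Submodule.coe_mem _
    have hπ : ∀ z ∈ NN T, π z = z := fun z hz => (Submodule.starProjection_eq_self_iff (K := NN T)).2 hz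
    have hcomm : (∫ s in (0:ℝ)..ε, π (U s x)) = π (∫ s in (0:ℝ)..ε, U s x) :=
      π.intervalIntegral_comp_comm (hIntU x 0 ε)
    have hcongr : (∫ s in (0:ℝ)..ε, π (U s x)) = ∫ s in (0:ℝ)..ε, U s x := by
      apply intervalIntegral.integral_congr
      intro s hs
      rw [Set.uIcc_of_le hε.le] at hs
      exact hπ _ (hUinvariant s hs.1 (hs.2.trans hεδ) x hx)
    have h16 : (∫ s in (0:ℝ)..ε, U s x) = π (∫ s in (0:ℝ)..ε, U s x) := by
      rw [← hcomm, hcongr]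
    rw [h16]
    exact hπmem _
  have hMN : ∀ x : H, x ∈ NN T → ∃ hx : x ∈ D, P ⟨x, hx⟩ ∈ NN T := by
    let M : Submodule ℂ H :=
      { carrier := {x : H | x ∈ NN T ∧ ∃ hx : x ∈ D, P ⟨x, hx⟩ ∈ NN T}
        add_mem' := by
          rintro x y ⟨hxN, hxD, hxP⟩ ⟨hyN, hyD, hyP⟩
          refine ⟨(NN T).add_mem hxN hyN, D.add_mem hxD hyD, ?_⟩
          have h17 : (⟨x + y, D.add_mem hxD hyD⟩ : D) = ⟨x, hxD⟩ + ⟨y, hyD⟩ := rfl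
          rw [h17, map_add]
          exact (NN T).add_mem hxP hyP
        zero_mem' := by
          refine ⟨(NN T).zero_mem, D.zero_mem, ?_⟩
          have h17 : (⟨0, D.zero_mem⟩ : D) = 0 := rfl
          rw [h17, map_zero]
          exact (NN T).zero_mem
        smul_mem' := by
          rintro c x ⟨hxN, hxD, hxP⟩
          refine ⟨(NN T).smul_mem c hxN, D.smul_mem c hxD, ?_⟩
          have h17 : (⟨c • x, D.smul_mem c hxD⟩ : D) = c • (⟨x, hxD⟩ : D) := rfl
          rw [h17, _root_.map_smul]
          exact (NN T).smul_mem c hxP }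
    have hwM : ∀ (x : H), x ∈ NN T → ∀ ε : ℝ, 0 < ε → ε ≤ δ/2 →
        (∫ s in (0:ℝ)..ε, U s x) ∈ M := by
      intro x hx ε hε hεδ
      have hwN : (∫ s in (0:ℝ)..ε, U s x) ∈ NN T := hintmem x ε hx hε (by linarith)
      set w := ∫ s in (0:ℝ)..ε, U s x with hwdef
      have hUzw : ∀ z : ℝ, U z w = (∫ s in (0:ℝ)..(ε+z), U s x) - (∫ s in (0:ℝ)..z, U s x) := by
        intro z
        have h1 : U z w = ∫ s in (0:ℝ)..ε, U z (U s x) := by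
          have h1' : (∫ s in (0:ℝ)..ε, ((U z : H →L[ℂ] H)) (U s x))
              = ((U z : H →L[ℂ] H)) (∫ s in (0:ℝ)..ε, U s x) :=
            ContinuousLinearMap.intervalIntegral_comp_comm _ (hIntU x 0 ε)
          rw [hwdef]
          exact h1'.symm
        have h2 : ∀ s : ℝ, U z (U s x) = U (s + z) x := by
          intro s
          rw [add_comm s z, hUgrp s z x]
        rw [h1]
        simp_rw [h2]
        rw [intervalIntegral.integral_comp_add_right (fun s => U s x) z]
        have h3 := intervalIntegral.integral_add_adjacent_intervals
          (hIntU x 0 z) (hIntU x z (ε+z))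
        rw [zero_add, ← h3]
        abel
      have hderiv : HasDerivAt (fun z => U z w) (U ε x - U 0 x) 0 := by
        have h4 : (fun z => U z w)
            = fun z => (∫ s in (0:ℝ)..(ε+z), U s x) - ∫ s in (0:ℝ)..z, U s x :=
          funext hUzw
        rw [h4]
        have d1 : HasDerivAt (fun z : ℝ => ∫ s in (0:ℝ)..(ε+z), U s x) (U (ε+0) x) 0 :=
          (hG x (ε+0)).comp_const_add ε 0
        have d2 := hG x 0
        rw [add_zero] at d1
        exact d1.sub d2
      have hq : Tendsto (fun z : ℝ => z⁻¹ • (U z w - w)) (nhdsWithin 0 {(0:ℝ)}ᶜ)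
          (nhds (U ε x - U 0 x)) := by
        have h5 := hasDerivAt_iff_tendsto_slope_zero.1 hderiv
        simpa [hU0 w] using h5
      obtain ⟨hwD, hwP⟩ := hPgen w (U ε x - U 0 x) hq
      refine ⟨hwN, hwD, ?_⟩
      have hPw : P ⟨w, hwD⟩ = Complex.I • (U ε x - U 0 x) := by
        rw [hwP, smul_smul]
        simp
      rw [hPw]
      apply (NN T).smul_mem
      exact (NN T).sub_mem (hUinvariant ε hε.le (by linarith) x hx)
        (by rw [hU0]; exact hx)
    intro x hx
    haveI := hNfd T (le_of_lt hTT)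
    have hMle : M ≤ NN T := fun z hz => hz.1
    haveI hMfd : FiniteDimensional ℂ ↥M := Submodule.finiteDimensional_of_le hMle
    have hMclosed : IsClosed (M : Set H) := Submodule.closed_of_finiteDimensional M
    set εs : ℕ → ℝ := fun n => (δ/2) * (1/((n:ℝ)+1)) with hεs
    have hεpos : ∀ n : ℕ, 0 < εs n := by
      intro n
      apply mul_pos (by linarith)
      positivity
    have hεle : ∀ n : ℕ, εs n ≤ δ/2 := by
      intro n
      rw [hεs]
      have h6 : 1/((n:ℝ)+1) ≤ 1 := by
        rw [div_le_one (by positivity)]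
        simp
      nlinarith
    have hε0 : Tendsto εs atTop (nhdsWithin 0 {(0:ℝ)}ᶜ) := by
      apply tendsto_nhdsWithin_of_tendsto_nhds_of_eventually_within
      · have h7 := tendsto_one_div_add_atTop_nhds_zero_nat.const_mul (δ/2)
        rw [mul_zero] at h7
        exact h7
      · filter_upwards with n using (hεpos n).ne'
    have hxlim : Tendsto (fun n : ℕ => (εs n)⁻¹ • (∫ s in (0:ℝ)..(εs n), U s x))
        atTop (nhds x) := by
      have h8 := hasDerivAt_iff_tendsto_slope_zero.1 (hG x 0)
      have h9 := h8.comp hε0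
      rw [hU0] at h9
      have h10 : ∀ n : ℕ, ((fun t : ℝ => t⁻¹ • ((∫ s in (0:ℝ)..(0+t), U s x)
          - ∫ s in (0:ℝ)..(0:ℝ), U s x)) ∘ εs) n
          = (εs n)⁻¹ • (∫ s in (0:ℝ)..(εs n), U s x) := by
        intro n
        simp [Function.comp]
      rwa [funext h10] at h9
    have hxM : x ∈ M := by
      apply hMclosed.mem_of_tendsto hxlim
      filter_upwards with n
      exact M.smul_of_tower_mem _ (hwM x hx (εs n) (hεpos n) (hεle n))
    exact hxM.2
  -- endgame: an eigenvector of P inside NN T contradicts unique continuation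
  haveI hfdT : FiniteDimensional ℂ ↥(NN T) := hNfd T hTT.le
  haveI : Nontrivial ↥(NN T) := by
    refine ⟨⟨⟨u, huN⟩, 0, ?_⟩⟩
    intro h
    exact hune (congrArg Subtype.val h)
  choose hxD hxP using hMN
  let j : ↥(NN T) →ₗ[ℂ] ↥D :=
    LinearMap.codRestrict D (NN T).subtype (fun z => hxD (z : H) z.2)
  let Pn : Module.End ℂ ↥(NN T) :=
    LinearMap.codRestrict (NN T) (P.comp j) (fun z => hxP (z : H) z.2)
  have hPnsym : Pn.IsSymmetric := by
    intro a b
    exact hPsym (j a) (j b)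
  obtain ⟨μ, hμ⟩ := Module.End.exists_eigenvalue Pn
  obtain ⟨z, hz⟩ := hμ.exists_hasEigenvector
  have hμreal : (starRingEnd ℂ) μ = μ := hPnsym.conj_eigenvalue_eq_self hμ
  have hμre : ((μ.re : ℝ) : ℂ) = μ := Complex.conj_eq_iff_re.1 hμreal
  have happ : Pn z = μ • z := hz.apply_eq_smul
  have happ' : P ⟨(z : H), hxD (z : H) z.2⟩ = ((μ.re : ℝ) : ℂ) • (z : H) := by
    have h18 : ((Pn z : ↥(NN T)) : H) = P ⟨(z : H), hxD (z : H) z.2⟩ := rfl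
    rw [← h18, happ, hμre]
    rfl
  have hBz : B (z : H) = 0 := by
    have h19 := z.2 0 ⟨le_refl (0:ℝ), hT0T.le⟩
    rwa [hU0] at h19
  have hz0 : (z : H) = 0 := hUC μ.re ⟨(z : H), hxD (z : H) z.2⟩ happ' hBz
  exact hz.2 (Subtype.ext hz0)
end
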